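/- arXiv:2502.04939 — 7 statements merged into one kernel-verified Lean document; each statement's English description precedes it below -/
import Mathlib

section
/- Fix n ≥ 3, m ≥ 1, k ∈ {1,...,n-1}, and set λ = -4^m sin^{2m}(πk/n) and γ = √(-λ). Then for any constants c₁, c₂ ∈ ℂ, the function X(t) = (c₁ cos(γt) + c₂ sin(γt))·P_k, where P_k = (1, ω^k, ..., ω^{(n-1)k})^T, solves X'' = (-1)^{m+1}M^m X for all t ∈ ℝ. -/
/-- The discrete Laplacian circulant matrix `circ(-2,1,0,…,0,1)` over `ℂ`. -/
noncomputable def lapM (n : ℕ) [NeZero n] : Matrix (Fin n) (Fin n) ℂ :=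
  Matrix.of fun i j =>
    (if j = i + 1 then 1 else 0) + (if j = i - 1 then 1 else 0) + (if j = i then -2 else 0)

/-- The basis polygon `P_k = (1, ω^k, …, ω^{(n-1)k})` with `ω = e^{2πi/n}`. -/
noncomputable def Pvec (n k : ℕ) : Fin n → ℂ :=
  fun j => Complex.exp (2 * (Real.pi : ℂ) * Complex.I * (k : ℂ) * ((j : ℕ) : ℂ) / (n : ℂ))

open Complex Real

lemma Pvec_eq (n k : ℕ) [NeZero n] (j : Fin n) :
    Pvec n k j = Complex.exp (2 * (Real.pi : ℂ) * Complex.I * k / n) ^ (j : ℕ) := by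
  rw [Pvec, ← Complex.exp_nat_mul]
  congr 1
  ring

lemma omega_pow_n (n k : ℕ) [NeZero n] :
    Complex.exp (2 * (Real.pi : ℂ) * Complex.I * k / n) ^ n = 1 := by
  rw [← Complex.exp_nat_mul]
  have hn : (n : ℂ) ≠ 0 := Nat.cast_ne_zero.mpr (NeZero.ne n)
  have : (n : ℂ) * (2 * (Real.pi : ℂ) * Complex.I * k / n) = (k : ℤ) * (2 * Real.pi * Complex.I) := by
    push_cast; field_simp
  rw [this, Complex.exp_int_mul_two_pi_mul_I]

lemma eig (n k : ℕ) [NeZero n] (hn : 3 ≤ n) :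
    (lapM n).mulVec (Pvec n k) =
      ((-(4 : ℝ) * Real.sin (Real.pi * k / n) ^ 2 : ℝ) : ℂ) • Pvec n k := by
  funext i
  set ω := Complex.exp (2 * (Real.pi : ℂ) * Complex.I * k / n) with hω
  have hωn : ω ^ n = 1 := omega_pow_n n k
  have hω0 : ω ≠ 0 := Complex.exp_ne_zero _
  have hmv : (lapM n).mulVec (Pvec n k) i
      = Pvec n k (i + 1) + Pvec n k (i - 1) + (-2) * Pvec n k i := by
    simp [lapM, Matrix.mulVec, dotProduct, add_mul, ite_mul,
      Finset.sum_add_distrib, Finset.sum_ite_eq']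
  have h1 : Pvec n k (i + 1) = ω * ω ^ (i : ℕ) := by
    rw [Pvec_eq, ← hω]
    have : ((i + 1 : Fin n) : ℕ) = ((i : ℕ) + 1) % n := by
      simp [Fin.add_def]
    rw [this, ← pow_eq_pow_mod _ hωn, pow_succ]
    ring
  have h2 : Pvec n k (i - 1) = ω⁻¹ * ω ^ (i : ℕ) := by
    have key : ω ^ ((i - 1 : Fin n) : ℕ) * ω = ω ^ (i : ℕ) := by
      rw [← pow_succ]
      have h' : (((i - 1 : Fin n) : ℕ) + 1) % n = (i : ℕ) := by
        have e : (i - 1) + (1 : Fin n) = i := sub_add_cancel _ _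
        have h2 := congrArg Fin.val e
        rwa [Fin.val_add, Fin.val_one', Nat.mod_eq_of_lt (show 1 < n by omega)] at h2
      rw [pow_eq_pow_mod _ hωn, h']
    rw [Pvec_eq, ← hω]
    field_simp at key ⊢
    linear_combination key
  have h3 : Pvec n k i = ω ^ (i : ℕ) := Pvec_eq n k i
  have hsum : ω + ω⁻¹ - 2 = ((-(4 : ℝ) * Real.sin (Real.pi * k / n) ^ 2 : ℝ) : ℂ) := by
    set ψ : ℂ := ((2 * Real.pi * k / n : ℝ) : ℂ) with hψ
    have hθ : (2 * (Real.pi : ℂ) * Complex.I * k / n) = ψ * Complex.I := by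
      rw [hψ]; push_cast; ring
    have hexp : ω = Complex.cos ψ + Complex.sin ψ * Complex.I := by
      rw [hω, hθ, Complex.exp_mul_I]
    have hexp' : ω⁻¹ = Complex.cos ψ - Complex.sin ψ * Complex.I := by
      rw [hω, hθ, ← Complex.exp_neg, show -(ψ * Complex.I) = (-ψ) * Complex.I by ring,
        Complex.exp_mul_I, Complex.cos_neg, Complex.sin_neg]
      ring
    have hcos : Real.cos (2 * Real.pi * k / n) = 1 - 2 * Real.sin (Real.pi * k / n) ^ 2 := by
      have h := Real.cos_two_mul (Real.pi * k / n)
      have h2 := Real.sin_sq_add_cos_sq (Real.pi * k / n)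
      rw [show 2 * Real.pi * (k : ℝ) / n = 2 * (Real.pi * k / n) by ring, h]
      nlinarith
    rw [hexp', hexp, hψ, ← Complex.ofReal_cos, ← Complex.ofReal_sin, hcos]
    push_cast
    ring
  rw [hmv, h1, h2, h3, Pi.smul_apply, h3, smul_eq_mul, ← hsum]
  ring

lemma eig_pow (n k m : ℕ) [NeZero n] (hn : 3 ≤ n) :
    ((lapM n) ^ m).mulVec (Pvec n k) =
      (((-(4 : ℝ) * Real.sin (Real.pi * k / n) ^ 2 : ℝ) : ℂ) ^ m) • Pvec n k := by
  induction m with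
  | zero => simp [Matrix.one_mulVec]
  | succ m ih =>
      rw [pow_succ, ← Matrix.mulVec_mulVec, eig n k hn, Matrix.mulVec_smul, ih,
        smul_smul, pow_succ]
      ring_nf

/-- Undamped oscillating mode solutions: with `λ = -4^m sin^{2m}(πk/n)` and `γ = √(-λ)`,
`X(t) = (c₁ cos(γt) + c₂ sin(γt)) • P_k` solves `X'' = (-1)^{m+1} M^m X`. -/
theorem undamped_mode_solution (n m k : ℕ) [NeZero n] (hn : 3 ≤ n) (hm : 1 ≤ m)
    (hk1 : 1 ≤ k) (hkn : k < n) (c₁ c₂ : ℂ)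
    (lam γ : ℝ)
    (hlam : lam = -(4 : ℝ) ^ m * Real.sin (Real.pi * k / n) ^ (2 * m))
    (hγ : γ = Real.sqrt (-lam))
    (X : ℝ → Fin n → ℂ)
    (hX : ∀ t : ℝ, X t = (c₁ * Real.cos (γ * t) + c₂ * Real.sin (γ * t)) • Pvec n k) :
    ∀ t : ℝ, deriv (deriv X) t = ((-1 : ℂ) ^ (m + 1) • (lapM n) ^ m).mulVec (X t) := by
  intro t
  set s : ℝ := Real.sin (Real.pi * k / n) with hs
  -- γ² = -lam
  have hlam_nonpos : lam ≤ 0 := by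
    rw [hlam, pow_mul]
    have : (0:ℝ) ≤ (4:ℝ) ^ m * (s ^ 2) ^ m :=
      mul_nonneg (pow_nonneg (by norm_num) m) (pow_nonneg (sq_nonneg s) m)
    nlinarith
  have hγ2 : γ ^ 2 = -lam := by
    rw [hγ, Real.sq_sqrt (by linarith)]
  -- scalar functions
  set f : ℝ → ℂ := fun t => c₁ * Real.cos (γ * t) + c₂ * Real.sin (γ * t) with hf_def
  set f1 : ℝ → ℂ := fun t =>
    c₁ * (-((γ * Real.sin (γ * t) : ℝ) : ℂ)) + c₂ * ((γ * Real.cos (γ * t) : ℝ) : ℂ) with hf1_def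
  have hlin : ∀ u : ℝ, HasDerivAt (fun t : ℝ => γ * t) γ u := by
    intro u; simpa using (hasDerivAt_id u).const_mul γ
  have hc : ∀ u : ℝ, HasDerivAt (fun t : ℝ => (Real.cos (γ * t) : ℂ))
      (-((γ * Real.sin (γ * u) : ℝ) : ℂ)) u := by
    intro u
    have h2 := ((Real.hasDerivAt_cos (γ * u)).comp u (hlin u)).ofReal_comp
    convert h2 using 1
    rfl
    push_cast; ring
  have hsn : ∀ u : ℝ, HasDerivAt (fun t : ℝ => (Real.sin (γ * t) : ℂ))
      (((γ * Real.cos (γ * u) : ℝ) : ℂ)) u := by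
    intro u
    have h2 := ((Real.hasDerivAt_sin (γ * u)).comp u (hlin u)).ofReal_comp
    convert h2 using 1
    rfl
    push_cast; ring
  have hf : ∀ u : ℝ, HasDerivAt f (f1 u) u := fun u =>
    ((hc u).const_mul c₁).add ((hsn u).const_mul c₂)
  have hf1 : ∀ u : ℝ, HasDerivAt f1 ((lam : ℂ) * f u) u := by
    intro u
    have hgs : HasDerivAt (fun t : ℝ => ((γ * Real.sin (γ * t) : ℝ) : ℂ))
        (((γ * (γ * Real.cos (γ * u)) : ℝ) : ℂ)) u := by
      have h2 := ((((Real.hasDerivAt_sin (γ * u)).comp u (hlin u)).const_mul γ)).ofReal_comp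
      convert h2 using 1
      rfl
      push_cast; ring
    have hgc : HasDerivAt (fun t : ℝ => ((γ * Real.cos (γ * t) : ℝ) : ℂ))
        ((-(γ * (γ * Real.sin (γ * u))) : ℝ) : ℂ) u := by
      have h2 := ((((Real.hasDerivAt_cos (γ * u)).comp u (hlin u)).const_mul γ)).ofReal_comp
      convert h2 using 1
      rfl
      push_cast; ring
    have h := ((hgs.neg).const_mul c₁).add (hgc.const_mul c₂)
    convert h using 1
    rfl
    rfl
    have hγ2' : ((γ : ℂ)) ^ 2 = -(lam : ℂ) := by
      have e : ((γ : ℂ)) ^ 2 = ((γ ^ 2 : ℝ) : ℂ) := by push_cast; ring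
      rw [e, hγ2]; push_cast; ring
    simp only [hf_def, hf1_def, Complex.ofReal_mul, Complex.ofReal_neg]
    linear_combination (c₂ * ((Real.sin (γ * u) : ℝ) : ℂ) + c₁ * ((Real.cos (γ * u) : ℝ) : ℂ)) * hγ2'
  -- derivatives of X
  have hXeq : X = fun u => f u • Pvec n k := funext fun u => hX u
  have hXd : ∀ u : ℝ, HasDerivAt X (f1 u • Pvec n k) u := by
    intro u; rw [hXeq]; exact (hf u).smul_const (Pvec n k)
  have hdX : deriv X = fun u => f1 u • Pvec n k := funext fun u => (hXd u).deriv
  have hXdd : deriv (deriv X) t = ((lam : ℂ) * f t) • Pvec n k := by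
    rw [hdX]
    exact (((hf1 t).smul_const (Pvec n k))).deriv
  -- key algebraic identity
  have hkey : (-1 : ℂ) ^ (m + 1) * ((-(4 : ℝ) * s ^ 2 : ℝ) : ℂ) ^ m = (lam : ℂ) := by
    have hr : (-1 : ℝ) ^ (m + 1) * (-(4 : ℝ) * s ^ 2) ^ m = lam := by
      rw [hlam, show (-(4:ℝ) * s ^ 2) = (-1) * (4 * s ^ 2) by ring, mul_pow, mul_pow,
        pow_mul]
      have hodd : (-1 : ℝ) ^ (m + 1) * (-1 : ℝ) ^ m = -1 := by
        rw [← pow_add]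
        exact Odd.neg_one_pow ⟨m, by ring⟩
      linear_combination (4 : ℝ) ^ m * (s ^ 2) ^ m * hodd
    calc (-1 : ℂ) ^ (m + 1) * ((-(4 : ℝ) * s ^ 2 : ℝ) : ℂ) ^ m
        = (((-1 : ℝ) ^ (m + 1) * (-(4 : ℝ) * s ^ 2) ^ m : ℝ) : ℂ) := by push_cast; ring
      _ = (lam : ℂ) := by rw [hr]
  -- RHS
  rw [hXdd, hX t]
  rw [Matrix.smul_mulVec, Matrix.mulVec_smul, eig_pow n k m hn, ← hs]
  rw [smul_smul, smul_smul]
  congr 1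
  simp only [hf_def]
  linear_combination
    (-(c₁ * ((Real.cos (γ * t) : ℝ) : ℂ) + c₂ * ((Real.sin (γ * t) : ℝ) : ℂ))) * hkey
end

section
/- Fix n ≥ 3, m ≥ 1, k ∈ {1,...,n-1}, β > 0 with β² > 4·4^m sin^{2m}(πk/n). Set λ = -4^m sin^{2m}(πk/n) and r_± = -β/2 ± √(β²/4 + λ). Then r_- < r_+ < 0, and for any c₁, c₂ ∈ ℂ, the function X(t) = (c₁ e^{r_+ t} + c₂ e^{r_- t})·P_k solves X'' + βX' = (-1)^{m+1}M^m X, and X(t) → 0 as t → ∞. -/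
namespace OverdampedAux

open Complex Filter

noncomputable def ee (n k a : ℕ) : ℂ :=
  Complex.exp (2 * (Real.pi : ℂ) * Complex.I * (k : ℂ) * (a : ℂ) / (n : ℂ))

lemma Pvec_eq (n k : ℕ) (j : Fin n) : Pvec n k j = ee n k j.val := rfl

lemma ee_ne_zero (n k a : ℕ) : ee n k a ≠ 0 := Complex.exp_ne_zero _

lemma ee_add (n k : ℕ) [NeZero n] (a b : ℕ) : ee n k (a + b) = ee n k a * ee n k b := by
  unfold ee
  rw [← Complex.exp_add]
  congr 1
  have hn : (n : ℂ) ≠ 0 := Nat.cast_ne_zero.mpr (NeZero.ne n)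
  field_simp
  push_cast
  ring

lemma ee_nmul (n k : ℕ) [NeZero n] (q : ℕ) : ee n k (n * q) = 1 := by
  induction q with
  | zero =>
    simp [ee]
  | succ q ih =>
    have : n * (q + 1) = n * q + n := by ring
    rw [this, ee_add, ih, one_mul]
    unfold ee
    have hn : (n : ℂ) ≠ 0 := Nat.cast_ne_zero.mpr (NeZero.ne n)
    have h : 2 * (Real.pi : ℂ) * Complex.I * (k : ℂ) * (n : ℂ) / (n : ℂ)
        = ((k : ℤ) : ℂ) * (2 * (Real.pi : ℂ) * Complex.I) := by
      field_simp; norm_cast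
    rw [h, Complex.exp_int_mul_two_pi_mul_I]

lemma ee_mod (n k : ℕ) [NeZero n] (a : ℕ) : ee n k (a % n) = ee n k a := by
  conv_rhs => rw [← Nat.div_add_mod a n]
  rw [ee_add, ee_nmul, one_mul]

lemma Pvec_succ (n k : ℕ) [NeZero n] (j : Fin n) :
    Pvec n k (j + 1) = ee n k 1 * Pvec n k j := by
  rw [Pvec_eq, Pvec_eq]
  have h : ((j + 1 : Fin n) : ℕ) = (j.val + (1 : Fin n).val) % n := by
    rw [Fin.add_def]
  rw [h, ee_mod, ee_add]
  have h1 : ee n k (1 : Fin n).val = ee n k 1 := by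
    have : ((1 : Fin n) : ℕ) = 1 % n := rfl
    rw [this, ee_mod]
  rw [h1]; ring

lemma Pvec_pred (n k : ℕ) [NeZero n] (j : Fin n) :
    Pvec n k j = ee n k 1 * Pvec n k (j - 1) := by
  have := Pvec_succ n k (j - 1)
  rwa [sub_add_cancel] at this

lemma lap_mulVec (n k : ℕ) [NeZero n] (j : Fin n) :
    (lapM n).mulVec (Pvec n k) j
      = Pvec n k (j + 1) + Pvec n k (j - 1) - 2 * Pvec n k j := by
  unfold lapM Matrix.mulVec dotProduct
  simp only [Matrix.of_apply, add_mul, Finset.sum_add_distrib, ite_mul, one_mul, zero_mul,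
    neg_mul]
  rw [Finset.sum_ite_eq' Finset.univ (j + 1) (Pvec n k),
    Finset.sum_ite_eq' Finset.univ (j - 1) (Pvec n k)]
  simp only [Finset.mem_univ, if_true]
  rw [Finset.sum_ite_eq' Finset.univ j (fun x => -(2 * Pvec n k x))]
  simp only [Finset.mem_univ, if_true]
  ring

/-- Eigenvalue of the Laplacian on `Pvec`. -/
noncomputable def mu (n k : ℕ) : ℂ := ee n k 1 + (ee n k 1)⁻¹ - 2

lemma lap_eigen (n k : ℕ) [NeZero n] :
    (lapM n).mulVec (Pvec n k) = mu n k • Pvec n k := by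
  funext j
  rw [lap_mulVec, Pvec_succ]
  have hpred : Pvec n k (j - 1) = (ee n k 1)⁻¹ * Pvec n k j := by
    rw [Pvec_pred n k j, ← mul_assoc, inv_mul_cancel₀ (ee_ne_zero n k 1), one_mul]
  rw [hpred]
  simp only [Pi.smul_apply, smul_eq_mul, mu]
  ring

lemma lap_pow_eigen (n k : ℕ) [NeZero n] (m : ℕ) :
    ((lapM n) ^ m).mulVec (Pvec n k) = (mu n k) ^ m • Pvec n k := by
  induction m with
  | zero => simp [Matrix.mulVec_one]
  | succ m ih =>
    rw [pow_succ, ← Matrix.mulVec_mulVec, lap_eigen, Matrix.mulVec_smul, ih,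
      smul_smul, pow_succ]
    ring_nf

lemma mu_value (n k : ℕ) [NeZero n] :
    mu n k = ((-4 * Real.sin (Real.pi * k / n) ^ 2 : ℝ) : ℂ) := by
  have hn : (n : ℂ) ≠ 0 := Nat.cast_ne_zero.mpr (NeZero.ne n)
  have hθ : ee n k 1 = Complex.exp (((2 * Real.pi * k / n : ℝ) : ℂ) * Complex.I) := by
    unfold ee
    congr 1
    push_cast
    field_simp
  have hθ' : (ee n k 1)⁻¹ = Complex.exp (-(((2 * Real.pi * k / n : ℝ) : ℂ) * Complex.I)) := by
    rw [hθ, ← Complex.exp_neg]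
  set θ : ℝ := 2 * Real.pi * k / n with hθdef
  have hsum : ee n k 1 + (ee n k 1)⁻¹ = 2 * ((Real.cos θ : ℝ) : ℂ) := by
    rw [hθ, ← Complex.exp_neg, Complex.exp_mul_I, ← neg_mul, Complex.exp_mul_I,
      Complex.cos_neg, Complex.sin_neg, Complex.ofReal_cos]
    ring
  unfold mu
  rw [hsum]
  have hreal : 2 * Real.cos θ - 2 = -4 * Real.sin (Real.pi * k / n) ^ 2 := by
    have hθ2 : θ = 2 * (Real.pi * k / n) := by rw [hθdef]; ring
    rw [hθ2, Real.cos_two_mul]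
    have := Real.sin_sq_add_cos_sq (Real.pi * k / n)
    nlinarith [this]
  push_cast [← hreal]
  ring

/-- Derivative of `t ↦ exp (a t)` as a real-variable complex function. -/
lemma hasDerivAt_cexp (a : ℂ) (t : ℝ) :
    HasDerivAt (fun s : ℝ => Complex.exp (a * s)) (a * Complex.exp (a * t)) t := by
  have h1 : HasDerivAt (fun z : ℂ => Complex.exp (a * z)) (Complex.exp (a * t) * a) (t : ℂ) := by
    have h2 : HasDerivAt (fun z : ℂ => a * z) a (t : ℂ) := by
      simpa using (hasDerivAt_id (t : ℂ)).const_mul a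
    exact (Complex.hasDerivAt_exp (a * t)).comp _ h2
  have := h1.comp_ofReal
  simpa [mul_comm] using this

end OverdampedAux

open OverdampedAux Complex Filter

/-- Overdamped mode solutions: with `λ = -4^m sin^{2m}(πk/n)`, `β² > -4λ` and
`r_± = -β/2 ± √(β²/4 + λ)`, we have `r_- < r_+ < 0`, the function
`X(t) = (c₁ e^{r₊t} + c₂ e^{r₋t}) • P_k` solves `X'' + βX' = (-1)^{m+1} M^m X`,
and `X(t) → 0` as `t → ∞`. -/
theorem overdamped_mode_solution (n m k : ℕ) [NeZero n] (hn : 3 ≤ n) (hm : 1 ≤ m)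
    (hk1 : 1 ≤ k) (hkn : k < n) (β : ℝ) (hβ : 0 < β)
    (hβ2 : 4 * ((4 : ℝ) ^ m * Real.sin (Real.pi * k / n) ^ (2 * m)) < β ^ 2)
    (c₁ c₂ : ℂ) (lam rp rm : ℝ)
    (hlam : lam = -(4 : ℝ) ^ m * Real.sin (Real.pi * k / n) ^ (2 * m))
    (hrp : rp = -β / 2 + Real.sqrt (β ^ 2 / 4 + lam))
    (hrm : rm = -β / 2 - Real.sqrt (β ^ 2 / 4 + lam))
    (X : ℝ → Fin n → ℂ)
    (hX : ∀ t : ℝ, X t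
      = (c₁ * Complex.exp ((rp : ℂ) * t) + c₂ * Complex.exp ((rm : ℂ) * t)) • Pvec n k) :
    (rm < rp ∧ rp < 0) ∧
      (∀ t : ℝ, deriv (deriv X) t + β • deriv X t
        = ((-1 : ℂ) ^ (m + 1) • (lapM n) ^ m).mulVec (X t)) ∧
      Filter.Tendsto X Filter.atTop (nhds 0) := by
  -- basic real facts
  have hnpos : 0 < (n : ℝ) := by positivity
  have hsin : 0 < Real.sin (Real.pi * k / n) := by
    apply Real.sin_pos_of_pos_of_lt_pi
    · have : (0 : ℝ) < (k : ℝ) := by exact_mod_cast hk1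
      positivity
    · rw [div_lt_iff₀ hnpos]
      have hk' : (k : ℝ) < (n : ℝ) := by exact_mod_cast hkn
      nlinarith [Real.pi_pos]
  have hlamneg : lam < 0 := by
    rw [hlam]
    have : 0 < (4 : ℝ) ^ m * Real.sin (Real.pi * k / n) ^ (2 * m) := by positivity
    linarith
  have hdisc : 0 < β ^ 2 / 4 + lam := by rw [hlam]; nlinarith
  set s : ℝ := Real.sqrt (β ^ 2 / 4 + lam) with hs
  have hs2 : s ^ 2 = β ^ 2 / 4 + lam := Real.sq_sqrt hdisc.le
  have hspos : 0 < s := Real.sqrt_pos.mpr hdisc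
  have hsltβ2 : s < β / 2 := by
    nlinarith [hs2, hspos, hlamneg]
  have horder : rm < rp ∧ rp < 0 := by
    constructor
    · rw [hrp, hrm]; linarith
    · rw [hrp]; linarith
  -- characteristic roots
  have hrp_root : rp ^ 2 + β * rp = lam := by
    rw [hrp]; nlinarith [hs2]
  have hrm_root : rm ^ 2 + β * rm = lam := by
    rw [hrm]; nlinarith [hs2]
  have hrp_rootC : (rp : ℂ) ^ 2 + (β : ℂ) * rp = (lam : ℂ) := by exact_mod_cast hrp_root
  have hrm_rootC : (rm : ℂ) ^ 2 + (β : ℂ) * rm = (lam : ℂ) := by exact_mod_cast hrm_root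
  -- the scalar factor and its derivatives
  set f : ℝ → ℂ := fun t => c₁ * Complex.exp ((rp : ℂ) * t) + c₂ * Complex.exp ((rm : ℂ) * t)
    with hf
  set f1 : ℝ → ℂ := fun t =>
    c₁ * ((rp : ℂ) * Complex.exp ((rp : ℂ) * t)) + c₂ * ((rm : ℂ) * Complex.exp ((rm : ℂ) * t))
    with hf1
  set f2 : ℝ → ℂ := fun t =>
    c₁ * ((rp : ℂ) ^ 2 * Complex.exp ((rp : ℂ) * t))
      + c₂ * ((rm : ℂ) ^ 2 * Complex.exp ((rm : ℂ) * t)) with hf2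
  have hXfun : X = fun t => f t • Pvec n k := funext hX
  have hdf : ∀ t : ℝ, HasDerivAt f (f1 t) t := by
    intro t
    have h1 := (hasDerivAt_cexp (rp : ℂ) t).const_mul c₁
    have h2 := (hasDerivAt_cexp (rm : ℂ) t).const_mul c₂
    simpa [hf, hf1, mul_assoc, Pi.add_def] using h1.add h2
  have hdf1 : ∀ t : ℝ, HasDerivAt f1 (f2 t) t := by
    intro t
    have h1 := ((hasDerivAt_cexp (rp : ℂ) t).const_mul ((rp : ℂ))).const_mul c₁
    have h2 := ((hasDerivAt_cexp (rm : ℂ) t).const_mul ((rm : ℂ))).const_mul c₂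
    have := h1.add h2
    simp only [Pi.add_def] at this
    simp only [hf1, hf2]
    convert this using 1
    exacts [rfl, by ring]
  have hdX : ∀ t : ℝ, HasDerivAt X (f1 t • Pvec n k) t := by
    intro t
    rw [hXfun]
    exact (hdf t).smul_const (Pvec n k)
  have hderivX : deriv X = fun t => f1 t • Pvec n k := funext fun t => (hdX t).deriv
  have hdX2 : ∀ t : ℝ, HasDerivAt (deriv X) (f2 t • Pvec n k) t := by
    intro t
    rw [hderivX]
    exact (hdf1 t).smul_const (Pvec n k)
  have hderivX2 : deriv (deriv X) = fun t => f2 t • Pvec n k := funext fun t => (hdX2 t).deriv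
  -- the eigenvalue identity
  have heig : ((-1 : ℂ) ^ (m + 1) * (mu n k) ^ m) = (lam : ℂ) := by
    have hreal : (-1 : ℝ) ^ (m + 1) * (-4 * Real.sin (Real.pi * k / n) ^ 2) ^ m = lam := by
      rw [hlam, show (-4 * Real.sin (Real.pi * k / n) ^ 2 : ℝ)
          = (-1) * (4 * Real.sin (Real.pi * k / n) ^ 2) from by ring, mul_pow, mul_pow,
        pow_mul]
      have h1 : (-1 : ℝ) ^ (m + 1) * (-1 : ℝ) ^ m = -1 := by
        rw [← pow_add, show m + 1 + m = 2 * m + 1 from by ring, pow_succ, pow_mul]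
        norm_num
      calc (-1 : ℝ) ^ (m + 1) * ((-1 : ℝ) ^ m * ((4 : ℝ) ^ m * (Real.sin (Real.pi * k / n) ^ 2) ^ m))
          = ((-1 : ℝ) ^ (m + 1) * (-1 : ℝ) ^ m) * ((4 : ℝ) ^ m * (Real.sin (Real.pi * k / n) ^ 2) ^ m) := by
            ring
        _ = -(4 : ℝ) ^ m * (Real.sin (Real.pi * k / n) ^ 2) ^ m := by rw [h1]; ring
    rw [mu_value]
    exact_mod_cast congrArg (fun x : ℝ => (x : ℂ)) hreal
  refine ⟨horder, ?_, ?_⟩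
  · -- the ODE
    intro t
    rw [hderivX2, hderivX, hX t]
    simp only [Matrix.smul_mulVec, Matrix.mulVec_smul, lap_pow_eigen, smul_smul]
    have hβs : β • f1 t • Pvec n k = ((β : ℂ) * f1 t) • Pvec n k := by
      rw [← smul_assoc, Complex.real_smul]
    rw [hβs, ← add_smul]
    congr 1
    rw [heig]
    simp only [hf1, hf2]
    linear_combination (c₁ * Complex.exp ((rp : ℂ) * t)) * hrp_rootC
      + (c₂ * Complex.exp ((rm : ℂ) * t)) * hrm_rootC
  · -- convergence to zero
    rw [hXfun]
    have hexp : ∀ r : ℝ, r < 0 →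
        Tendsto (fun t : ℝ => Complex.exp ((r : ℂ) * t)) atTop (nhds 0) := by
      intro r hr
      rw [tendsto_zero_iff_norm_tendsto_zero]
      have hnorm : (fun t : ℝ => ‖Complex.exp ((r : ℂ) * t)‖) = fun t => Real.exp (r * t) := by
        funext t
        rw [Complex.norm_exp]
        congr 1
        simp [Complex.mul_re]
      rw [hnorm]
      apply Real.tendsto_exp_atBot.comp
      have h1 : Tendsto (fun t : ℝ => (-r) * t) atTop atTop :=
        Tendsto.const_mul_atTop (by linarith) tendsto_id
      have h2 : Tendsto (fun t : ℝ => -((-r) * t)) atTop atBot :=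
        tendsto_neg_atTop_atBot.comp h1
      convert h2 using 2 with t
      ring
    have hfz : Tendsto f atTop (nhds 0) := by
      have h1 := (hexp rp horder.2).const_mul c₁
      have h2 := (hexp rm (lt_trans horder.1 horder.2)).const_mul c₂
      have := h1.add h2
      simpa [hf] using this
    have := hfz.smul_const (Pvec n k)
    simpa using this
end

section
/- Let β > 0 and m ≥ 1. Suppose X(t) = X_0 + h(t) with h: ℝ → ℂ^n having all entries equal to a common function h(t) of t and h(0) = 0, and suppose X satisfies X'' + βX' = (-1)^{m+1}M^m X for all t. Then X_0 has all entries equal, i.e., X_0 is a constant vector and X is a trivial (point) solution. -/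
namespace NTS
variable {n : ℕ} [NeZero n]

lemma lapM_mulVec (x : Fin n → ℂ) :
    (lapM n).mulVec x = fun i => x (i + 1) + x (i - 1) - 2 * x i := by
  funext i
  simp only [lapM, Matrix.mulVec, dotProduct, Matrix.of_apply, add_mul, ite_mul, one_mul,
    zero_mul, neg_mul, Finset.sum_add_distrib, Finset.sum_ite_eq', Finset.mem_univ, if_true]
  ring

lemma sum_shift (x : Fin n → ℂ) : ∑ i, x (i + 1) = ∑ i, x i :=
  Fintype.sum_equiv (Equiv.addRight 1) _ _ (fun _ => rfl)

lemma sum_shift' (x : Fin n → ℂ) : ∑ i, x (i - 1) = ∑ i, x i :=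
  Fintype.sum_equiv (Equiv.subRight 1) _ _ (fun _ => rfl)

lemma sum_mulVec (x : Fin n → ℂ) : ∑ i, (lapM n).mulVec x i = 0 := by
  rw [lapM_mulVec]
  rw [Finset.sum_sub_distrib, Finset.sum_add_distrib, sum_shift, sum_shift', ← Finset.mul_sum]
  ring

lemma sum_mulVec_pow (m : ℕ) (hm : 1 ≤ m) (x : Fin n → ℂ) :
    ∑ i, ((lapM n) ^ m).mulVec x i = 0 := by
  obtain ⟨k, rfl⟩ : ∃ k, m = k + 1 := ⟨m - 1, by omega⟩
  rw [pow_succ', ← Matrix.mulVec_mulVec]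
  exact sum_mulVec _

lemma lapM_const_mulVec (c : ℂ) : (lapM n).mulVec (fun _ => c) = 0 := by
  rw [lapM_mulVec]; funext i; ring_nf; rfl

lemma lapM_pow_const_mulVec (m : ℕ) (hm : 1 ≤ m) (c : ℂ) :
    ((lapM n) ^ m).mulVec (fun _ => c) = 0 := by
  obtain ⟨k, rfl⟩ : ∃ k, m = k + 1 := ⟨m - 1, by omega⟩
  rw [pow_succ, ← Matrix.mulVec_mulVec, lapM_const_mulVec, Matrix.mulVec_zero]

lemma lapM_isHermitian : (lapM n).IsHermitian := by
  have h1 : ∀ i j : Fin n, (i = j + 1) ↔ (j = i - 1) := by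
    intro i j; rw [eq_sub_iff_add_eq]; exact eq_comm
  have h2 : ∀ i j : Fin n, (i = j - 1) ↔ (j = i + 1) := by
    intro i j; rw [eq_sub_iff_add_eq]; exact eq_comm
  unfold Matrix.IsHermitian
  ext i j
  simp only [Matrix.conjTranspose_apply, lapM, Matrix.of_apply, star_add,
    apply_ite (star : ℂ → ℂ), star_one, star_zero, star_neg, star_ofNat]
  have e1 : (if i = j + 1 then (1:ℂ) else 0) = (if j = i - 1 then 1 else 0) :=
    if_congr (h1 i j) rfl rfl
  have e2 : (if i = j - 1 then (1:ℂ) else 0) = (if j = i + 1 then 1 else 0) :=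
    if_congr (h2 i j) rfl rfl
  have e3 : (if i = j then (-2:ℂ) else 0) = (if j = i then -2 else 0) := if_congr eq_comm rfl rfl
  rw [e1, e2, e3]
  ring

open Fin.NatCast in
lemma step_const (y : Fin n → ℂ) (hy : ∀ i, y (i + 1) = y i) : ∀ i j : Fin n, y i = y j := by
  have key : ∀ (k : ℕ) (i : Fin n), y (i + (k : Fin n)) = y i := by
    intro k
    induction k with
    | zero => simp
    | succ k ih =>
      intro i
      have hc : ((k + 1 : ℕ) : Fin n) = (k : Fin n) + 1 := by push_cast; ring
      rw [hc, ← add_assoc, hy, ih]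
  intro i j
  have : i + (((j - i : Fin n).val : Fin n)) = j := by
    rw [Fin.cast_val_eq_self]
    rw [add_comm, sub_add_cancel]
  rw [← this, key]

lemma ker_const (x : Fin n → ℂ) (hx : (lapM n).mulVec x = 0) : ∀ i j : Fin n, x i = x j := by
  have hrec : ∀ i : Fin n, x (i + 1) + x (i - 1) - 2 * x i = 0 := by
    intro i
    have := congrFun hx i
    rwa [lapM_mulVec] at this
  set d : Fin n → ℂ := fun i => x (i + 1) - x i with hd
  have hdstep : ∀ i, d (i + 1) = d i := by
    intro i
    have h0 := hrec (i + 1)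
    rw [add_sub_cancel_right] at h0
    simp only [hd]
    linear_combination h0
  have hdconst := step_const d hdstep
  have hsum : ∑ i, d i = 0 := by
    simp only [hd, Finset.sum_sub_distrib, sum_shift, sub_self]
  have hdzero : ∀ i, d i = 0 := by
    intro i
    have : ∑ j, d j = ∑ _j : Fin n, d i := Finset.sum_congr rfl (fun j _ => hdconst j i)
    rw [hsum, Finset.sum_const, Finset.card_univ, Fintype.card_fin] at this
    have hn : (n : ℂ) ≠ 0 := Nat.cast_ne_zero.mpr (NeZero.ne n)
    have := this.symm
    rw [nsmul_eq_mul] at this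
    exact (mul_eq_zero.mp this).resolve_left hn
  apply step_const
  intro i
  have := hdzero i
  simp only [hd] at this
  exact sub_eq_zero.mp this

end NTS

namespace NTS
variable {n : ℕ} [NeZero n]

lemma star_dot_self_eq_zero (v : Fin n → ℂ)
    (hv : dotProduct (star v) v = 0) : v = 0 := by
  have h2 : dotProduct (star v) v = ((∑ i, Complex.normSq (v i) : ℝ) : ℂ) := by
    rw [dotProduct]
    push_cast
    refine Finset.sum_congr rfl fun i _ => ?_
    rw [Pi.star_apply, Complex.star_def, mul_comm]
    exact Complex.mul_conj (v i)
  rw [h2] at hv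
  have h1 : ∑ i, Complex.normSq (v i) = 0 := by exact_mod_cast hv
  funext i
  exact Complex.normSq_eq_zero.mp
    ((Finset.sum_eq_zero_iff_of_nonneg (fun i _ => Complex.normSq_nonneg (v i))).mp h1 i
      (Finset.mem_univ i))

lemma mulVec_eq_zero_of_sq (A : Matrix (Fin n) (Fin n) ℂ) (hA : A.IsHermitian)
    (x : Fin n → ℂ) (hx : (A * A).mulVec x = 0) : A.mulVec x = 0 := by
  have key : dotProduct (star (A.mulVec x)) (A.mulVec x) = 0 := by
    rw [Matrix.star_mulVec, ← Matrix.dotProduct_mulVec, hA.eq, Matrix.mulVec_mulVec, hx,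
      dotProduct_zero]
  exact star_dot_self_eq_zero _ key

lemma pow_ker : ∀ m : ℕ, 1 ≤ m → ∀ x : Fin n → ℂ,
    ((lapM n) ^ m).mulVec x = 0 → (lapM n).mulVec x = 0 := by
  intro m
  induction m using Nat.strong_induction_on with
  | _ m ih =>
    intro hm x hx
    rcases Nat.lt_or_ge m 2 with h2 | h2
    · interval_cases m
      simpa using hx
    · set k := m - 1 with hkdef
      have hk : m = k + 1 := by omega
      have hzero : ((lapM n) ^ k).mulVec x = 0 := by
        apply mulVec_eq_zero_of_sq _ (lapM_isHermitian.pow k)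
        have hpow : (lapM n) ^ k * (lapM n) ^ k = (lapM n) ^ (k - 1) * (lapM n) ^ m := by
          rw [← pow_add, ← pow_add]
          congr 1
          omega
        rw [hpow, ← Matrix.mulVec_mulVec, hx, Matrix.mulVec_zero]
      exact ih k (by omega) (by omega) x hzero

end NTS

/-- No nontrivial self-similar translating solutions: if `X(t) = X₀ + (h(t),…,h(t))`
solves `X'' + βX' = (-1)^{m+1} M^m X` with `h(0) = 0` and `β > 0`, then `X₀` is a
constant vector (all entries equal). -/
theorem no_translating_solutions (n m : ℕ) [NeZero n] (hm : 1 ≤ m)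
    (β : ℝ) (hβ : 0 < β) (X₀ : Fin n → ℂ) (h : ℝ → ℂ)
    (hh : Differentiable ℝ h) (hh' : Differentiable ℝ (deriv h)) (hh0 : h 0 = 0)
    (X : ℝ → Fin n → ℂ) (hX : ∀ t : ℝ, X t = X₀ + fun _ => h t)
    (hflow : ∀ t : ℝ, deriv (deriv X) t + β • deriv X t
      = ((-1 : ℂ) ^ (m + 1) • (lapM n) ^ m).mulVec (X t)) :
    ∀ i j : Fin n, X₀ i = X₀ j := by
  -- first derivative of X
  have hXd : ∀ t : ℝ, HasDerivAt X (fun _ : Fin n => deriv h t) t := by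
    intro t
    rw [hasDerivAt_pi]
    intro i
    have heq : (fun s => X s i) = fun s => X₀ i + h s := by
      funext s; rw [hX s]; rfl
    rw [heq]
    exact ((hh t).hasDerivAt).const_add (X₀ i)
  have hderiv1 : deriv X = fun t => (fun _ : Fin n => deriv h t) :=
    funext fun t => (hXd t).deriv
  have hXd2 : ∀ t : ℝ, HasDerivAt (deriv X) (fun _ : Fin n => deriv (deriv h) t) t := by
    intro t
    rw [hderiv1, hasDerivAt_pi]
    intro i
    exact (hh' t).hasDerivAt
  have hderiv2 : deriv (deriv X) = fun t => (fun _ : Fin n => deriv (deriv h) t) :=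
    funext fun t => (hXd2 t).deriv
  -- the right-hand side is constant in t
  have hRHS : ∀ t : ℝ, ((-1 : ℂ) ^ (m + 1) • (lapM n) ^ m).mulVec (X t)
      = (-1 : ℂ) ^ (m + 1) • ((lapM n) ^ m).mulVec X₀ := by
    intro t
    rw [hX t, Matrix.smul_mulVec, Matrix.mulVec_add, NTS.lapM_pow_const_mulVec m hm,
      add_zero]
  -- entries of M^m X₀ are all equal
  set y : Fin n → ℂ := ((lapM n) ^ m).mulVec X₀ with hy
  have hyconst : ∀ i j : Fin n, y i = y j := by
    intro i j
    have h0 := hflow 0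
    rw [hderiv2, hderiv1, hRHS 0] at h0
    have hi := congrFun h0 i
    have hj := congrFun h0 j
    simp only [Pi.add_apply, Pi.smul_apply] at hi hj
    have : (-1 : ℂ) ^ (m + 1) • y i = (-1 : ℂ) ^ (m + 1) • y j := by
      rw [← hi, ← hj]
    have hne : ((-1 : ℂ) ^ (m + 1)) ≠ 0 := by
      apply pow_ne_zero; norm_num
    exact smul_right_injective _ hne this
  -- the entries sum to zero, hence all vanish
  have hysum : ∑ i, y i = 0 := NTS.sum_mulVec_pow m hm X₀
  have hyzero : y = 0 := by
    funext i
    have hsum2 : ∑ j, y j = ∑ _j : Fin n, y i :=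
      Finset.sum_congr rfl (fun j _ => hyconst j i)
    rw [hysum, Finset.sum_const, Finset.card_univ, Fintype.card_fin, nsmul_eq_mul] at hsum2
    have hn : (n : ℂ) ≠ 0 := Nat.cast_ne_zero.mpr (NeZero.ne n)
    have := hsum2.symm
    exact (mul_eq_zero.mp this).resolve_left hn
  have hker : (lapM n).mulVec X₀ = 0 := NTS.pow_ker m hm X₀ hyzero
  exact NTS.ker_const X₀ hker
end

section
/- Let m ≥ 1, β = 0, and suppose a planar polygon evolves by pure rotation X(t) = X_0 e^{i f(t)} (viewing X_0 ∈ ℂ^n), where f is twice differentiable, f(0) = 0, and X satisfies X'' = (-1)^{m+1}M^m X for all t. If X_0 ≠ 0, then f'(t) is constant equal to some b with b² = 4^m sin^{2m}(πk/n) for some k ∈ {0,...,n-1}, and X_0 lies in the eigenspace of (-1)^{m+1}M^m with eigenvalue -b². -/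
lemma pow_mod_eq {η : ℂ} {n : ℕ} (h : η ^ n = 1) (a : ℕ) : η ^ (a % n) = η ^ a := by
  conv_rhs => rw [← Nat.div_add_mod a n]
  rw [pow_add, pow_mul, h, one_pow, one_mul]

lemma lap_eig (n : ℕ) [NeZero n] (η : ℂ) (hη : η ^ n = 1) :
    (lapM n).mulVec (fun j : Fin n => η ^ (j : ℕ))
      = (η + η ^ (n - 1 % n) - 2) • (fun j : Fin n => η ^ (j : ℕ)) := by
  have hmod := pow_mod_eq hη
  funext i
  have h1 : ((i + 1 : Fin n) : ℕ) = ((i : ℕ) + 1 % n) % n := by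
    simp [Fin.add_def, Fin.val_one']
  have h2 : ((i - 1 : Fin n) : ℕ) = ((i : ℕ) + (n - 1 % n)) % n := by
    rw [Fin.sub_def, Fin.val_one', Nat.add_comm]
  have hn : 0 < n := Nat.pos_of_ne_zero (NeZero.ne n)
  have hinv : η ^ (n - 1 % n) * η = 1 := by
    have he : n - 1 % n + 1 % n = n :=
      Nat.sub_add_cancel (le_of_lt (Nat.mod_lt 1 hn))
    calc η ^ (n - 1 % n) * η = η ^ (n - 1 % n) * η ^ (1 % n) := by rw [hmod, pow_one]
    _ = η ^ n := by rw [← pow_add, he]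
    _ = 1 := hη
  simp only [Matrix.mulVec, dotProduct, lapM, Matrix.of_apply]
  simp only [add_mul, Finset.sum_add_distrib, ite_mul, one_mul, zero_mul, neg_mul]
  rw [Finset.sum_ite_eq' , Finset.sum_ite_eq', Finset.sum_ite_eq']
  simp only [Finset.mem_univ, if_true, Pi.smul_apply, smul_eq_mul]
  rw [h1, h2, hmod, hmod, pow_add, pow_add, hmod, pow_one]
  ring

open Complex in
lemma pow_eig {n : ℕ} [NeZero n] {A : Matrix (Fin n) (Fin n) ℂ} {v : Fin n → ℂ} {μ : ℂ}
    (h : A.mulVec v = μ • v) : ∀ m, (A ^ m).mulVec v = (μ ^ m) • v := by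
  intro m
  induction m with
  | zero => simp [Matrix.one_mulVec]
  | succ m ih =>
      rw [pow_succ, ← Matrix.mulVec_mulVec, h, Matrix.mulVec_smul, ih, smul_smul, pow_succ]
      ring_nf

open Complex Real in
lemma mu_real (n : ℕ) [NeZero n] (k : ℕ) :
    Complex.exp (2 * Real.pi * Complex.I / n) ^ k
      + (Complex.exp (2 * Real.pi * Complex.I / n) ^ k) ^ (n - 1 % n) - 2
      = ((-4 * Real.sin (Real.pi * k / n) ^ 2 : ℝ) : ℂ) := by
  have hn : 0 < n := Nat.pos_of_ne_zero (NeZero.ne n)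
  set ζ := Complex.exp (2 * Real.pi * Complex.I / n) with hζ
  have hζn : ζ ^ n = 1 := (Complex.isPrimitiveRoot_exp n (NeZero.ne n)).pow_eq_one
  set η := ζ ^ k with hηdef
  have hηn : η ^ n = 1 := by rw [hηdef, ← pow_mul, mul_comm, pow_mul, hζn, one_pow]
  have hηe : η = Complex.exp (((2 * (Real.pi * k / n) : ℝ) : ℂ) * Complex.I) := by
    rw [hηdef, hζ, ← Complex.exp_nat_mul]
    congr 1
    push_cast
    ring
  have hηne : η ≠ 0 := by
    intro h0
    rw [h0, zero_pow hn.ne'] at hηn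
    exact zero_ne_one hηn
  have hinv : η ^ (n - 1 % n) = η⁻¹ := by
    have he : n - 1 % n + 1 % n = n := Nat.sub_add_cancel (le_of_lt (Nat.mod_lt 1 hn))
    have h1 : η ^ (n - 1 % n) * η = 1 := by
      calc η ^ (n - 1 % n) * η = η ^ (n - 1 % n) * η ^ (1 % n) := by
            rw [pow_mod_eq hηn, pow_one]
      _ = η ^ n := by rw [← pow_add, he]
      _ = 1 := hηn
    field_simp at h1 ⊢
    linear_combination h1
  set θ : ℝ := Real.pi * k / n with hθ
  have hcos : η + η ^ (n - 1 % n) = 2 * Complex.cos ((2 * θ : ℝ) : ℂ) := by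
    rw [hinv, hηe, ← Complex.exp_neg, Complex.two_cos, neg_mul]
  rw [sub_eq_iff_eq_add, hcos, ← Complex.ofReal_cos]
  have : (-4 : ℝ) * Real.sin θ ^ 2 + 2 = 2 * Real.cos (2 * θ) := by
    have h1 := Real.sin_sq_add_cos_sq θ
    have h2 := Real.cos_two_mul θ
    nlinarith [h1, h2]
  have h3 := congrArg (fun x : ℝ => (x : ℂ)) this.symm
  push_cast at h3 ⊢
  linear_combination h3

open Complex Real in
lemma spectrum_of_eig (n : ℕ) [NeZero n] (m : ℕ) (X₀ : Fin n → ℂ) (hX₀ : X₀ ≠ 0) (c : ℂ)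
    (hc : ((-1 : ℂ) ^ (m + 1) • (lapM n) ^ m).mulVec X₀ = c • X₀) :
    ∃ k : Fin n, c = (-1 : ℂ) ^ (m + 1) *
      (Complex.exp (2 * Real.pi * Complex.I / n) ^ (k : ℕ)
        + (Complex.exp (2 * Real.pi * Complex.I / n) ^ (k : ℕ)) ^ (n - 1 % n) - 2) ^ m := by
  have hn : 0 < n := Nat.pos_of_ne_zero (NeZero.ne n)
  set ζ := Complex.exp (2 * Real.pi * Complex.I / n) with hζdef
  have hprim : IsPrimitiveRoot ζ n := Complex.isPrimitiveRoot_exp n (NeZero.ne n)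
  have hζn : ζ ^ n = 1 := hprim.pow_eq_one
  set F : Matrix (Fin n) (Fin n) ℂ := Matrix.vandermonde (fun i : Fin n => ζ ^ (i : ℕ)) with hF
  have hdet : F.det ≠ 0 := by
    rw [hF, Matrix.det_vandermonde_ne_zero_iff]
    intro i j hij
    exact Fin.ext (hprim.pow_inj i.isLt j.isLt hij)
  have hFu : IsUnit F.det := isUnit_iff_ne_zero.mpr hdet
  set lam : Fin n → ℂ :=
    fun k => (-1 : ℂ) ^ (m + 1) * (ζ ^ (k : ℕ) + (ζ ^ (k : ℕ)) ^ (n - 1 % n) - 2) ^ m with hlam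
  set A : Matrix (Fin n) (Fin n) ℂ := (-1 : ℂ) ^ (m + 1) • (lapM n) ^ m with hA
  have hcol : ∀ k : Fin n, (fun i : Fin n => F i k) = fun i : Fin n => (ζ ^ (k : ℕ)) ^ (i : ℕ) := by
    intro k
    funext i
    rw [hF]
    simp only [Matrix.vandermonde, Matrix.of_apply]
    rw [← pow_mul, ← pow_mul, mul_comm]
  have hcoleig : ∀ k : Fin n, A.mulVec (fun i => F i k) = lam k • (fun i => F i k) := by
    intro k
    have hηn : (ζ ^ (k : ℕ)) ^ n = 1 := by rw [← pow_mul, mul_comm, pow_mul, hζn, one_pow]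
    have h1 := lap_eig n (ζ ^ (k : ℕ)) hηn
    have h2 := pow_eig h1 m
    rw [hcol k, hA, Matrix.smul_mulVec, h2, smul_smul, hlam]
  have hAF : A * F = F * Matrix.diagonal lam := by
    ext i k
    rw [Matrix.mul_diagonal]
    have := congrFun (hcoleig k) i
    simp only [Matrix.mulVec, dotProduct, Pi.smul_apply, smul_eq_mul] at this
    rw [Matrix.mul_apply]
    rw [this, mul_comm]
  set a : Fin n → ℂ := F⁻¹.mulVec X₀ with ha
  have hXa : F.mulVec a = X₀ := by
    rw [ha, Matrix.mulVec_mulVec, Matrix.mul_nonsing_inv _ hFu, Matrix.one_mulVec]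
  have key : ∀ k, lam k * a k = c * a k := by
    have h1 : F.mulVec ((Matrix.diagonal lam).mulVec a) = F.mulVec (c • a) := by
      rw [Matrix.mulVec_mulVec, ← hAF, ← Matrix.mulVec_mulVec, hXa, hc, Matrix.mulVec_smul, hXa]
    have h2 : (Matrix.diagonal lam).mulVec a = c • a := by
      have h3 := congrArg (F⁻¹.mulVec) h1
      simp only [Matrix.mulVec_mulVec, ← Matrix.mul_assoc, Matrix.nonsing_inv_mul _ hFu,
        Matrix.one_mul, Matrix.one_mulVec] at h3
      exact h3
    intro k
    have := congrFun h2 k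
    rwa [Matrix.mulVec_diagonal, Pi.smul_apply, smul_eq_mul] at this
  have hane : a ≠ 0 := by
    intro h0
    rw [h0, Matrix.mulVec_zero] at hXa
    exact hX₀ hXa.symm
  obtain ⟨k, hk⟩ := Function.ne_iff.mp hane
  exact ⟨k, (mul_right_cancel₀ hk (key k)).symm⟩

/-- Undamped rotating self-similar solutions: if `X(t) = X₀ e^{i f(t)}` solves
`X'' = (-1)^{m+1} M^m X` with `f(0) = 0` and `X₀ ≠ 0`, then `f' ≡ b` with
`b² = 4^m sin^{2m}(πk/n)` for some `k`, and `X₀` is an eigenvector of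
`(-1)^{m+1} M^m` with eigenvalue `-b²`. -/
theorem undamped_rotators (n m : ℕ) [NeZero n] (hm : 1 ≤ m)
    (f : ℝ → ℝ) (hf : Differentiable ℝ f) (hf' : Differentiable ℝ (deriv f))
    (hf0 : f 0 = 0) (X₀ : Fin n → ℂ) (hX₀ : X₀ ≠ 0)
    (X : ℝ → Fin n → ℂ)
    (hX : ∀ t : ℝ, X t = fun j => X₀ j * Complex.exp (Complex.I * (f t : ℂ)))
    (hflow : ∀ t : ℝ, deriv (deriv X) t
      = ((-1 : ℂ) ^ (m + 1) • (lapM n) ^ m).mulVec (X t)) :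
    ∃ b : ℝ, ∃ k : ℕ, k < n ∧ (∀ t : ℝ, deriv f t = b) ∧
      b ^ 2 = (4 : ℝ) ^ m * Real.sin (Real.pi * k / n) ^ (2 * m) ∧
      ((-1 : ℂ) ^ (m + 1) • (lapM n) ^ m).mulVec X₀ = ((-(b ^ 2) : ℝ) : ℂ) • X₀ := by
  classical
  set g : ℝ → ℂ := fun t => Complex.exp (Complex.I * (f t : ℂ)) with hg
  have hXeq : X = fun t => g t • X₀ := by
    funext t
    rw [hX t]
    funext j
    simp [hg, smul_eq_mul, mul_comm]
  have hgd : ∀ t, HasDerivAt g (g t * (Complex.I * ((deriv f t : ℝ) : ℂ))) t := by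
    intro t
    exact (((hf t).hasDerivAt.ofReal_comp).const_mul Complex.I).cexp
  have hX1 : ∀ t, HasDerivAt X ((g t * (Complex.I * ((deriv f t : ℝ) : ℂ))) • X₀) t := by
    intro t
    rw [hXeq]
    exact (hgd t).smul_const X₀
  have hderivX : deriv X = fun t => (g t * (Complex.I * ((deriv f t : ℝ) : ℂ))) • X₀ :=
    funext fun t => (hX1 t).deriv
  set c : ℝ → ℂ := fun t => Complex.I * ((deriv (deriv f) t : ℝ) : ℂ) - (((deriv f t : ℝ) : ℂ)) ^ 2
    with hcdef
  have hX2 : ∀ t, deriv (deriv X) t = (g t * c t) • X₀ := by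
    intro t
    rw [hderivX]
    have hb : HasDerivAt (fun s : ℝ => Complex.I * (((deriv f s : ℝ) : ℂ)))
        (Complex.I * (((deriv (deriv f) t : ℝ) : ℂ))) t :=
      ((hf' t).hasDerivAt.ofReal_comp).const_mul Complex.I
    have hd : HasDerivAt (fun s => g s * (Complex.I * (((deriv f s : ℝ) : ℂ)))) (g t * c t) t := by
      have h := (hgd t).mul hb
      refine h.congr_deriv (Eq.symm ?_)
      rw [hcdef]
      simp only
      linear_combination (-(g t) * (((deriv f t : ℝ) : ℂ))^2) * Complex.I_sq
    exact (hd.smul_const X₀).deriv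
  have hgne : ∀ t, g t ≠ 0 := fun t => Complex.exp_ne_zero _
  have hceq : ∀ t, c t • X₀ = ((-1 : ℂ) ^ (m + 1) • (lapM n) ^ m).mulVec X₀ := by
    intro t
    have h1 := hflow t
    rw [hX2 t, hX t] at h1
    have h2 : (fun j => X₀ j * g t) = g t • X₀ := by
      funext j
      simp [smul_eq_mul, mul_comm]
    rw [h2, Matrix.mulVec_smul] at h1
    have h3 : g t • (c t • X₀) = g t • (((-1 : ℂ) ^ (m + 1) • (lapM n) ^ m).mulVec X₀) := by
      rw [smul_smul]
      exact h1
    exact smul_right_injective _ (hgne t) h3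
  have hcconst : ∀ t, c t = c 0 := by
    intro t
    have h := (hceq t).trans (hceq 0).symm
    have h0 : (c t - c 0) • X₀ = 0 := by rw [sub_smul, h, sub_self]
    rcases smul_eq_zero.mp h0 with h' | h'
    · exact sub_eq_zero.mp h'
    · exact absurd h' hX₀
  have hre : ∀ t, (deriv f t) ^ 2 = (deriv f 0) ^ 2 := by
    intro t
    have h := congrArg Complex.re (hcconst t)
    simpa [hcdef, Complex.ext_iff, ← Complex.ofReal_pow] using h
  have him : ∀ t, deriv (deriv f) t = deriv (deriv f) 0 := by
    intro t
    have h := congrArg Complex.im (hcconst t)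
    simpa [hcdef, Complex.ext_iff, ← Complex.ofReal_pow] using h
  have hβ : deriv (deriv f) 0 = 0 := by
    by_contra hβ0
    have hzero : ∀ t, deriv f t = 0 := by
      intro t
      have hsq : (fun s => (deriv f s) ^ 2) = fun _ => (deriv f 0) ^ 2 := funext hre
      have hd1 : HasDerivAt (fun s => (deriv f s) ^ 2)
          (2 * deriv f t * deriv (deriv f) t) t := by
        have h := ((hf' t).hasDerivAt).pow 2
        refine h.congr_deriv (Eq.symm ?_)
        push_cast
        ring
      have hz : deriv (fun s => (deriv f s) ^ 2) t = 0 := by rw [hsq]; simp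
      rw [hd1.deriv, him t] at hz
      rcases mul_eq_zero.mp hz with h' | h'
      · rcases mul_eq_zero.mp h' with h'' | h''
        · norm_num at h''
        · exact h''
      · exact absurd h' hβ0
    have hd : deriv f = fun _ => (0 : ℝ) := funext hzero
    rw [hd] at hβ0
    simp at hβ0
  have hfd0 : ∀ t, deriv (deriv f) t = 0 := fun t => (him t).trans hβ
  have hconst : ∀ t, deriv f t = deriv f 0 :=
    fun t => is_const_of_deriv_eq_zero hf' hfd0 t 0
  set b := deriv f 0 with hbdef
  have hc0 : c 0 = ((-(b ^ 2) : ℝ) : ℂ) := by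
    rw [hcdef]
    simp only
    rw [hβ]
    push_cast
    ring
  have hAX : ((-1 : ℂ) ^ (m + 1) • (lapM n) ^ m).mulVec X₀ = ((-(b ^ 2) : ℝ) : ℂ) • X₀ := by
    rw [← hceq 0, hc0]
  obtain ⟨k, hk⟩ := spectrum_of_eig n m X₀ hX₀ _ hAX
  rw [mu_real n k.val] at hk
  refine ⟨b, k.val, k.isLt, hconst, ?_, hAX⟩
  set s : ℝ := Real.sin (Real.pi * (k : ℕ) / n) with hs
  have e1 : ((-4 * s ^ 2 : ℝ) : ℂ) = -(4 * ((s : ℂ)) ^ 2) := by push_cast; ring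
  have e15 : (-(4 * (s : ℂ) ^ 2)) ^ m = (-1 : ℂ) ^ m * ((4 : ℂ) ^ m * ((s : ℂ) ^ 2) ^ m) := by
    rw [neg_pow, mul_pow]
  rw [e1, e15] at hk
  have e2 : (-1 : ℂ) ^ (m + 1) * ((-1 : ℂ) ^ m * ((4 : ℂ) ^ m * ((s : ℂ) ^ 2) ^ m))
      = -((4 : ℂ) ^ m * (s : ℂ) ^ (2 * m)) := by
    rw [← mul_assoc, ← pow_add]
    have h21 : (-1 : ℂ) ^ (m + 1 + m) = -1 := by
      have hee : m + 1 + m = 2 * m + 1 := by ring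
      rw [hee, pow_succ, pow_mul]
      norm_num
    rw [h21, ← pow_mul]
    ring_nf
  rw [e2] at hk
  have h4 : (-(b ^ 2) : ℝ) = -((4 : ℝ) ^ m * s ^ (2 * m)) := by exact_mod_cast hk
  linarith
end

section
/- Let m ≥ 1 and β > 0. If X(t) = X_0 e^{ibt} (with X_0 ∈ ℂ^n and b ∈ ℝ) satisfies X'' + βX' = (-1)^{m+1}M^m X for all t, then either b = 0 or X_0 = 0; in either case X_0 has all entries equal. That is, there are no nontrivial planar solutions evolving by pure rotation when β > 0. -/
open Matrix Complex
open scoped ComplexOrder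

lemma lapM_isHermitian (n : ℕ) [NeZero n] : (lapM n).IsHermitian := by
  ext i j
  have h1 : (i = j + 1) ↔ (j = i - 1) := by constructor <;> intro h <;> subst h <;> simp
  have h2 : (i = j - 1) ↔ (j = i + 1) := by constructor <;> intro h <;> subst h <;> simp
  have h3 : (i = j) ↔ (j = i) := eq_comm
  simp only [conjTranspose_apply, lapM, Matrix.of_apply, h1, h2, h3, star_add,
    apply_ite (star : ℂ → ℂ), star_one, star_zero, star_neg, star_ofNat]
  ring

lemma herm_ker_step {n : ℕ} {M : Matrix (Fin n) (Fin n) ℂ} (hM : M.IsHermitian)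
    {x : Fin n → ℂ} {j : ℕ} (hj : 1 ≤ j) (h : (M ^ (j + 1)) *ᵥ x = 0) :
    (M ^ j) *ᵥ x = 0 := by
  have h2j : (M ^ (2 * j)) *ᵥ x = 0 := by
    have : M ^ (2 * j) = M ^ (j - 1) * M ^ (j + 1) := by
      rw [← pow_add]; congr 1; omega
    rw [this, ← mulVec_mulVec, h, mulVec_zero]
  have key : star ((M ^ j) *ᵥ x) ⬝ᵥ ((M ^ j) *ᵥ x) = 0 := by
    rw [star_mulVec, (hM.pow j).eq, ← dotProduct_mulVec, mulVec_mulVec, ← pow_add,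
      show j + j = 2 * j by ring, h2j, dotProduct_zero]
  exact dotProduct_star_self_eq_zero.1 key

lemma herm_ker_pow {n : ℕ} {M : Matrix (Fin n) (Fin n) ℂ} (hM : M.IsHermitian)
    {x : Fin n → ℂ} : ∀ m : ℕ, 1 ≤ m → (M ^ m) *ᵥ x = 0 → M *ᵥ x = 0 := by
  intro m
  induction m with
  | zero => omega
  | succ k ih =>
    intro _ h
    rcases Nat.eq_zero_or_pos k with hk | hk
    · subst hk; simpa using h
    · exact ih hk (herm_ker_step hM hk h)

lemma lapM_mulVec_apply {n : ℕ} [NeZero n] (x : Fin n → ℂ) (i : Fin n) :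
    ((lapM n) *ᵥ x) i = x (i + 1) + x (i - 1) - 2 * x i := by
  simp [lapM, mulVec, dotProduct, add_mul, Finset.sum_add_distrib]
  ring

open Fin.NatCast in
lemma lap_ker_const {n : ℕ} [NeZero n] {x : Fin n → ℂ}
    (h : (lapM n) *ᵥ x = 0) : ∀ i j : Fin n, x i = x j := by
  have hrec : ∀ i : Fin n, x (i + 1) + x (i - 1) - 2 * x i = 0 := by
    intro i; rw [← lapM_mulVec_apply, h]; rfl
  set d : Fin n → ℂ := fun i => x (i + 1) - x i with hd_def
  have hd : ∀ i : Fin n, d (i + 1) = d i := by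
    intro i
    have := hrec (i + 1)
    simp only [add_sub_cancel_right] at this
    simp only [hd_def]
    linear_combination this
  have hd0 : ∀ k : ℕ, d ((k : Fin n)) = d 0 := by
    intro k
    induction k with
    | zero => simp
    | succ j ih => rw [Nat.cast_add_one, hd, ih]
  have hdall : ∀ i : Fin n, d i = d 0 := fun i => by
    have := hd0 i.val; rwa [Fin.cast_val_eq_self] at this
  have hsum : ∑ i : Fin n, d i = 0 := by
    simp only [hd_def]
    rw [Finset.sum_sub_distrib,
      Fintype.sum_equiv (Equiv.addRight (1 : Fin n)) (fun i => x (i + 1)) x fun i => rfl,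
      sub_self]
  have hzero : d 0 = 0 := by
    rw [Finset.sum_congr rfl fun i _ => hdall i, Finset.sum_const, Finset.card_univ,
      Fintype.card_fin] at hsum
    have hn : (n : ℂ) ≠ 0 := Nat.cast_ne_zero.2 (NeZero.ne n)
    simpa [nsmul_eq_mul, hn] using hsum
  have hstep : ∀ i : Fin n, x (i + 1) = x i := by
    intro i
    have := hdall i
    rw [hzero, hd_def, sub_eq_zero] at this
    exact this
  have hx0 : ∀ k : ℕ, x ((k : Fin n)) = x 0 := by
    intro k
    induction k with
    | zero => simp
    | succ j ih => rw [Nat.cast_add_one, hstep, ih]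
  intro i j
  have hi := hx0 i.val; have hj := hx0 j.val
  rw [Fin.cast_val_eq_self] at hi hj
  rw [hi, hj]

/-- No nontrivial rotating solutions with damping: if `β > 0` and
`X(t) = X₀ e^{ibt}` solves `X'' + βX' = (-1)^{m+1} M^m X`, then `b = 0` or `X₀ = 0`,
and in either case `X₀` has all entries equal. -/
theorem no_damped_rotators (n m : ℕ) [NeZero n] (hm : 1 ≤ m)
    (β : ℝ) (hβ : 0 < β) (b : ℝ) (X₀ : Fin n → ℂ)
    (X : ℝ → Fin n → ℂ)
    (hX : ∀ t : ℝ, X t = fun j => X₀ j * Complex.exp (Complex.I * (b : ℂ) * (t : ℂ)))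
    (hflow : ∀ t : ℝ, deriv (deriv X) t + β • deriv X t
      = ((-1 : ℂ) ^ (m + 1) • (lapM n) ^ m).mulVec (X t)) :
    (b = 0 ∨ X₀ = 0) ∧ ∀ i j : Fin n, X₀ i = X₀ j := by
  set A : Matrix (Fin n) (Fin n) ℂ := (-1 : ℂ) ^ (m + 1) • (lapM n) ^ m with hA_def
  set ib : ℂ := Complex.I * (b : ℂ) with hib
  -- derivative of the exponential factor
  have hc : ∀ t : ℝ, HasDerivAt (fun s : ℝ => Complex.exp (ib * (s : ℂ)))
      (Complex.exp (ib * (t : ℂ)) * ib) t := by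
    intro t
    have hlin : HasDerivAt (fun s : ℝ => ib * (s : ℂ)) ib t := by
      simpa using (Complex.ofRealCLM.hasDerivAt (x := t)).const_mul ib
    exact hlin.cexp
  have hXeq : X = fun t : ℝ => Complex.exp (ib * (t : ℂ)) • X₀ := by
    funext t
    rw [hX t]; funext j; simp [mul_comm]
  have hX' : ∀ t : ℝ, HasDerivAt X ((Complex.exp (ib * (t : ℂ)) * ib) • X₀) t := by
    intro t; rw [hXeq]; exact (hc t).smul_const X₀
  have hderiv : deriv X = fun t : ℝ => Complex.exp (ib * (t : ℂ)) • (ib • X₀) := by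
    funext t
    rw [(hX' t).deriv, smul_smul]
  have hX'' : ∀ t : ℝ, HasDerivAt (deriv X)
      ((Complex.exp (ib * (t : ℂ)) * ib) • (ib • X₀)) t := by
    intro t; rw [hderiv]; exact (hc t).smul_const (ib • X₀)
  have hexp0 : Complex.exp (ib * ((0 : ℝ) : ℂ)) = 1 := by simp
  have hflow0 := hflow 0
  rw [(hX'' 0).deriv] at hflow0
  rw [hderiv] at hflow0
  rw [hX 0] at hflow0
  simp only [hexp0, one_mul, one_smul, Complex.ofReal_zero, mul_zero, Complex.exp_zero,
    mul_one] at hflow0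
  -- hflow0 : ib • (ib • X₀) + β • (ib • X₀) = A *ᵥ X₀
  set lam : ℂ := ib * ib + (β : ℂ) * ib with hlam
  have heig : lam • X₀ = A *ᵥ X₀ := by
    rw [← hflow0]
    funext j
    simp [hlam, Complex.real_smul]
    ring
  -- A is Hermitian
  have hMH := lapM_isHermitian n
  have hAH : Aᴴ = A := by
    rw [hA_def, conjTranspose_smul, (hMH.pow m).eq]
    congr 1
    simp
  -- quadratic form realness
  set S : ℂ := star X₀ ⬝ᵥ X₀ with hS
  have hSstar : star S = S := by
    rw [hS, ← star_dotProduct_star, star_star]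
  have hq : lam * S = star X₀ ⬝ᵥ (A *ᵥ X₀) := by
    rw [← heig]
    simp [hS, dotProduct_smul, smul_eq_mul]
  have hqstar : star (lam * S) = lam * S := by
    nth_rewrite 1 [hq]
    rw [← star_dotProduct_star, star_star, star_mulVec, hAH, ← dotProduct_mulVec, ← hq]
  have hdiff : (lam - star lam) * S = 0 := by
    rw [star_mul', hSstar] at hqstar
    linear_combination -hqstar
  have himag : lam - star lam = 2 * Complex.I * (β : ℂ) * (b : ℂ) := by
    rw [hlam, hib]
    simp only [Complex.star_def, map_add, _root_.map_mul, map_pow, Complex.conj_I,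
      Complex.conj_ofReal]
    ring
  rcases eq_or_ne X₀ 0 with hX0 | hX0
  · exact ⟨Or.inr hX0, fun i j => by rw [hX0]; rfl⟩
  · have hSne : S ≠ 0 := fun h => hX0 (dotProduct_star_self_eq_zero.1 h)
    have hb : b = 0 := by
      have h2 : lam - star lam = 0 := by
        rcases mul_eq_zero.1 hdiff with h | h
        · exact h
        · exact absurd h hSne
      rw [himag] at h2
      have h3 : (2 * Complex.I) * ((β : ℂ) * (b : ℂ)) = 0 := by linear_combination h2
      have h4 : (β : ℂ) * (b : ℂ) = 0 :=
        (mul_eq_zero.1 h3).resolve_left (by simp [Complex.I_ne_zero])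
      rcases mul_eq_zero.1 h4 with h | h
      · exact absurd (Complex.ofReal_eq_zero.1 h) (ne_of_gt hβ)
      · exact Complex.ofReal_eq_zero.1 h
    have hlam0 : lam = 0 := by
      rw [hlam, hib, hb]
      simp
    have hAker : A *ᵥ X₀ = 0 := by rw [← heig, hlam0, zero_smul]
    have hMker : ((lapM n) ^ m) *ᵥ X₀ = 0 := by
      rw [hA_def, smul_mulVec] at hAker
      have hne : ((-1 : ℂ) ^ (m + 1)) ≠ 0 := by
        simp
      exact (smul_eq_zero.1 hAker).resolve_left hne
    have hMx : (lapM n) *ᵥ X₀ = 0 := herm_ker_pow hMH m hm hMker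
    exact ⟨Or.inl hb, lap_ker_const hMx⟩
end

section
/- Let n ≥ 3, m ≥ 1, β > 0 with 4^m sin^{2m}(π/n) < β²/4, and suppose X_0 = Σ_k α_k^0 P_k with α_1^0 ≠ 0. Let X(t) be the solution of X'' + βX' = (-1)^{m+1}M^m X with X(0) = X_0 and all free constants zero (so α_k(t) = α_k^0 e^{r_{+,k}t} for k ≥ 1, α_0(t) = α_0^0, where r_{+,k} = -β/2 + √(β²/4 + λ_{m,k})). Then the rescaled polygon Y(t) = e^{-r_{+,1}t}(X(t) - α_0^0 P_0) converges as t → ∞ to α_1^0 P_1 + α_{n-1}^0 P_{n-1}. -/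
open Filter

/-- On the "first half", `sin (π j / n)` strictly exceeds `sin (π / n)` for `2 ≤ j`. -/
lemma sin_aux_half {n j : ℕ} (hn : 3 ≤ n) (hj : 2 ≤ j) (hjn : 2 * j ≤ n) :
    Real.sin (Real.pi / n) < Real.sin (Real.pi * j / n) := by
  have hπ := Real.pi_pos
  have hn0 : (0 : ℝ) < n := by positivity
  have hjr : (2 : ℝ) ≤ j := by exact_mod_cast hj
  have hjnr : 2 * (j : ℝ) ≤ n := by exact_mod_cast hjn
  apply Real.strictMonoOn_sin
  · constructor
    · have : (0:ℝ) ≤ Real.pi / n := by positivity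
      linarith [Real.pi_pos]
    · rw [div_le_div_iff₀ hn0 (by norm_num : (0:ℝ) < 2)]
      nlinarith
  · constructor
    · have : (0:ℝ) ≤ Real.pi * j / n := by positivity
      linarith
    · rw [div_le_div_iff₀ hn0 (by norm_num : (0:ℝ) < 2)]
      nlinarith
  · rw [div_lt_div_iff₀ hn0 hn0]
    nlinarith [mul_pos hπ hn0]

/-- For `2 ≤ k ≤ n - 2`, `sin (π k / n)` strictly exceeds `sin (π / n)`. -/
lemma sin_aux {n k : ℕ} (hn : 3 ≤ n) (hk2 : 2 ≤ k) (hk : k + 2 ≤ n) :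
    Real.sin (Real.pi / n) < Real.sin (Real.pi * k / n) := by
  rcases le_or_gt (2 * k) n with h | h
  · exact sin_aux_half hn hk2 h
  · have hkr : (k : ℝ) ≤ n := by exact_mod_cast le_of_add_le_left hk
    have hn0 : (0 : ℝ) < n := by positivity
    have hs : Real.sin (Real.pi * k / n) = Real.sin (Real.pi * (n - k : ℕ) / n) := by
      have hcast : ((n - k : ℕ) : ℝ) = (n : ℝ) - k := by
        rw [Nat.cast_sub (by omega)]
      rw [hcast, show Real.pi * ((n:ℝ) - k) / n = Real.pi - Real.pi * k / n by
        field_simp, Real.sin_pi_sub]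
    rw [hs]
    exact sin_aux_half hn (by omega) (by omega)

/-- Overdamped regime, rescaled limit: when `4^m sin^{2m}(π/n) < β²/4` and `α⁰_1 ≠ 0`,
the rescaled polygon `Y(t) = e^{-r₊,₁ t}(X(t) - α⁰_0 P_0)` converges as `t → ∞` to
`α⁰_1 P_1 + α⁰_{n-1} P_{n-1}`, an affine image of a regular polygon. -/
theorem rescaled_limit_overdamped (n m : ℕ) [NeZero n] (hn : 3 ≤ n) (hm : 1 ≤ m)
    (β : ℝ) (hβ : 0 < β)
    (hover : (4 : ℝ) ^ m * Real.sin (Real.pi / n) ^ (2 * m) < β ^ 2 / 4)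
    (α0 : ℕ → ℂ) (hα1 : α0 1 ≠ 0)
    (lam rp : ℕ → ℝ)
    (hlam : ∀ k, lam k = -(4 : ℝ) ^ m * Real.sin (Real.pi * k / n) ^ (2 * m))
    (hrp : ∀ k, rp k = -β / 2 + Real.sqrt (β ^ 2 / 4 + lam k))
    (X : ℝ → Fin n → ℂ)
    (hX : ∀ t : ℝ, X t = α0 0 • Pvec n 0
      + ∑ k ∈ Finset.Ico 1 n, (α0 k * Complex.exp ((rp k : ℂ) * t)) • Pvec n k) :
    Filter.Tendsto
      (fun t : ℝ => Complex.exp (-(rp 1 : ℂ) * t) • (X t - α0 0 • Pvec n 0))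
      Filter.atTop
      (nhds (α0 1 • Pvec n 1 + α0 (n - 1) • Pvec n (n - 1))) := by
  have hπ := Real.pi_pos
  have hn0 : (0 : ℝ) < n := by positivity
  -- λ_1 and its positivity margin
  have hlam1 : lam 1 = -(4:ℝ) ^ m * Real.sin (Real.pi / n) ^ (2 * m) := by
    rw [hlam 1]; norm_num
  have hpos1 : 0 < β ^ 2 / 4 + lam 1 := by rw [hlam1]; nlinarith
  -- λ_{n-1} = λ_1 hence r_{n-1} = r_1
  have hlamn1 : lam (n - 1) = lam 1 := by
    rw [hlam (n - 1), hlam1]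
    congr 2
    have hcast : ((n - 1 : ℕ) : ℝ) = (n : ℝ) - 1 := by
      rw [Nat.cast_sub (by omega)]; norm_num
    rw [hcast, show Real.pi * ((n:ℝ) - 1) / n = Real.pi - Real.pi / n by
      field_simp, Real.sin_pi_sub]
  have hrpn1 : rp (n - 1) = rp 1 := by rw [hrp, hrp, hlamn1]
  -- strict decay for intermediate modes
  have hdecay : ∀ k, 2 ≤ k → k + 2 ≤ n → rp k < rp 1 := by
    intro k hk2 hkn
    have hsin : Real.sin (Real.pi / n) < Real.sin (Real.pi * k / n) := sin_aux hn hk2 hkn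
    have hsin0 : 0 ≤ Real.sin (Real.pi / n) := by
      apply Real.sin_nonneg_of_nonneg_of_le_pi
      · positivity
      · exact div_le_self hπ.le (by exact_mod_cast (by omega : 1 ≤ n))
    have hpow : Real.sin (Real.pi / n) ^ (2 * m) < Real.sin (Real.pi * k / n) ^ (2 * m) :=
      pow_lt_pow_left₀ hsin hsin0 (by omega)
    have hlt : β ^ 2 / 4 + lam k < β ^ 2 / 4 + lam 1 := by
      rw [hlam k, hlam1]
      have h4 : (0:ℝ) < (4:ℝ) ^ m := by positivity
      nlinarith
    have hsq : Real.sqrt (β ^ 2 / 4 + lam k) < Real.sqrt (β ^ 2 / 4 + lam 1) := by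
      rcases le_or_gt 0 (β ^ 2 / 4 + lam k) with h | h
      · exact Real.sqrt_lt_sqrt h hlt
      · rw [Real.sqrt_eq_zero_of_nonpos h.le]
        exact Real.sqrt_pos.mpr hpos1
    rw [hrp k, hrp 1]; linarith
  -- limit values of each mode
  set L : ℕ → (Fin n → ℂ) := fun k =>
    if k = 1 ∨ k = n - 1 then α0 k • Pvec n k else 0 with hL
  -- the rescaled function equals a finite sum of modes
  have key : (fun t : ℝ => Complex.exp (-(rp 1 : ℂ) * t) • (X t - α0 0 • Pvec n 0))
      = fun t : ℝ => ∑ k ∈ Finset.Ico 1 n,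
          (α0 k * Complex.exp (((rp k : ℂ) - rp 1) * t)) • Pvec n k := by
    funext t
    rw [hX t, add_sub_cancel_left, Finset.smul_sum]
    apply Finset.sum_congr rfl
    intro k _
    rw [smul_smul]
    congr 1
    rw [sub_mul, Complex.exp_sub, neg_mul, div_eq_mul_inv, ← Complex.exp_neg]
    ring
  rw [key]
  -- each mode converges to L k
  have hterm : ∀ k ∈ Finset.Ico 1 n,
      Tendsto (fun t : ℝ => (α0 k * Complex.exp (((rp k : ℂ) - rp 1) * t)) • Pvec n k)
        atTop (nhds (L k)) := by
    intro k hk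
    rw [Finset.mem_Ico] at hk
    by_cases h1 : k = 1
    · subst h1
      simp only [hL, if_pos (Or.inl rfl), sub_self, zero_mul, Complex.exp_zero, mul_one]
      exact tendsto_const_nhds
    by_cases h2 : k = n - 1
    · subst h2
      simp only [hL, if_pos (Or.inr rfl), hrpn1, sub_self, zero_mul, Complex.exp_zero, mul_one]
      exact tendsto_const_nhds
    · have hrk : rp k < rp 1 := hdecay k (by omega) (by omega)
      have hc : rp k - rp 1 < 0 := by linarith
      have hexp : Tendsto (fun t : ℝ => Complex.exp (((rp k : ℂ) - rp 1) * t)) atTop (nhds 0) := by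
        rw [tendsto_zero_iff_norm_tendsto_zero]
        have hnorm : ∀ t : ℝ, ‖Complex.exp (((rp k : ℂ) - rp 1) * t)‖
            = Real.exp ((rp k - rp 1) * t) := by
          intro t
          rw [show ((rp k : ℂ) - rp 1) * t = (((rp k - rp 1) * t : ℝ) : ℂ) by push_cast; ring]
          rw [Complex.norm_exp, Complex.ofReal_re]
        simp only [hnorm]
        exact Real.tendsto_exp_atBot.comp
          ((tendsto_const_mul_atBot_of_neg hc).2 tendsto_id)
      have := ((hexp.const_mul (α0 k)).smul_const (Pvec n k))
      simpa [hL, h1, h2] using this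
  have hsum := tendsto_finset_sum (Finset.Ico 1 n) hterm
  convert hsum using 2
  -- compute the total limit
  have hne : (1 : ℕ) ≠ n - 1 := by omega
  have hsub : ({1, n - 1} : Finset ℕ) ⊆ Finset.Ico 1 n := by
    intro x hx
    simp only [Finset.mem_insert, Finset.mem_singleton] at hx
    rw [Finset.mem_Ico]
    rcases hx with h | h <;> omega
  rw [← Finset.sum_subset hsub, Finset.sum_pair hne]
  · simp only [hL, if_pos (Or.inl rfl), if_pos (Or.inr rfl)]
  · intro x _ hx
    simp only [Finset.mem_insert, Finset.mem_singleton, not_or] at hx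
    simp [hL, hx.1, hx.2]
end

section
/- Let n ≥ 3, m ≥ 1, β > 0, and fix target Y = Σ_k y_k P_k ∈ ℂ^n. Let X(t) solve X'' + βX' = (-1)^{m+1}M^m(X - Y) with X(0) = X_0 = Σ_k α_k^0 P_k, constructed by choosing the free constant in the k = 0 mode so that the mode-0 coefficient tends to y_0 (i.e., a_0 = β(y_0 - α_0^0)), and all other free constants zero. Then X(t) → Y as t → ∞. -/
section YauAux

open Complex Filter

private lemma yau_hasDerivAt_cexp_real (p : ℂ) (t : ℝ) :
    HasDerivAt (fun t : ℝ => Complex.exp (p * t)) (p * Complex.exp (p*t)) t := by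
  have h : HasDerivAt (fun x : ℂ => Complex.exp (p * x)) (p * Complex.exp (p * t)) (t:ℂ) := by
    simpa [mul_comm] using ((hasDerivAt_id (t:ℂ)).const_mul p).cexp
  exact h.comp_ofReal

private lemma yau_hasDerivAt_ccos_real (q : ℂ) (t : ℝ) :
    HasDerivAt (fun t : ℝ => Complex.cos (q * t)) (-q * Complex.sin (q*t)) t := by
  have h : HasDerivAt (fun x : ℂ => Complex.cos (q * x)) (-q * Complex.sin (q * t)) (t:ℂ) := by
    have := ((hasDerivAt_id (t:ℂ)).const_mul q).ccos
    simpa [mul_comm] using this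
  exact h.comp_ofReal

private lemma yau_hasDerivAt_csin_real (q : ℂ) (t : ℝ) :
    HasDerivAt (fun t : ℝ => Complex.sin (q * t)) (q * Complex.cos (q*t)) t := by
  have h : HasDerivAt (fun x : ℂ => Complex.sin (q * x)) (q * Complex.cos (q * t)) (t:ℂ) := by
    have := ((hasDerivAt_id (t:ℂ)).const_mul q).csin
    simpa [mul_comm] using this
  exact h.comp_ofReal

private lemma yau_mode_bundle (β lam : ℝ) (w : ℝ → ℂ)
    (h : ∃ p q : ℝ, p < 0 ∧ p^2 + β*p - q^2 = lam ∧ (q = 0 ∨ 2*p + β = 0) ∧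
      ∀ t : ℝ, w t = Complex.exp (p*t) * Complex.cos (q*t)) :
    w 0 = 1 ∧
    Filter.Tendsto w Filter.atTop (nhds 0) ∧
    ∃ w1 : ℝ → ℂ, (∀ t, HasDerivAt w (w1 t) t) ∧
      (∀ t, HasDerivAt w1 ((lam:ℂ) * w t - (β:ℂ) * w1 t) t) := by
  obtain ⟨p, q, hp, hpq, hc, hw⟩ := h
  have hwf : w = fun t : ℝ => Complex.exp (p*t) * Complex.cos (q*t) := funext hw
  subst hwf
  have hpqC : (p:ℂ)^2 + (β:ℂ)*p - (q:ℂ)^2 = (lam:ℂ) := by exact_mod_cast hpq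
  have hqC : (q:ℂ) * (2*(p:ℂ) + (β:ℂ)) = 0 := by
    rcases hc with h0 | h0
    · simp [h0]
    · have : (2*(p:ℂ) + (β:ℂ)) = 0 := by exact_mod_cast h0
      simp [this]
  refine ⟨by simp, ?_, ?_⟩
  · apply squeeze_zero_norm (a := fun t => Real.exp (p * t))
    · intro t
      have h1 : ((q:ℂ) * (t:ℂ)) = ((q*t : ℝ) : ℂ) := by push_cast; ring
      rw [h1, ← Complex.ofReal_cos]
      rw [norm_mul, Complex.norm_exp]
      have : ((p:ℂ) * (t:ℂ)).re = p * t := by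
        rw [show ((p:ℂ)*(t:ℂ)) = ((p*t:ℝ):ℂ) by push_cast; ring, Complex.ofReal_re]
      rw [this]
      calc Real.exp (p*t) * ‖((Real.cos (q*t) : ℝ) : ℂ)‖
          ≤ Real.exp (p*t) * 1 := by
            gcongr
            rw [Complex.norm_real]
            exact abs_le.mpr ⟨Real.neg_one_le_cos _, Real.cos_le_one _⟩
          _ = Real.exp (p*t) := mul_one _
    · exact Real.tendsto_exp_atBot.comp
        ((tendsto_const_mul_atBot_of_neg hp).mpr tendsto_id)
  · refine ⟨fun t => (p:ℂ) * (Complex.exp (p*t) * Complex.cos (q*t))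
      - (q:ℂ) * (Complex.exp (p*t) * Complex.sin (q*t)), fun t => ?_, fun t => ?_⟩
    · have := (yau_hasDerivAt_cexp_real p t).fun_mul (yau_hasDerivAt_ccos_real q t)
      refine this.congr_deriv ?_
      beta_reduce
      ring
    · have h1 := ((yau_hasDerivAt_cexp_real p t).fun_mul (yau_hasDerivAt_ccos_real q t)).const_mul (p:ℂ)
      have h2 := ((yau_hasDerivAt_cexp_real p t).fun_mul (yau_hasDerivAt_csin_real q t)).const_mul (q:ℂ)
      have := h1.fun_sub h2
      refine this.congr_deriv ?_
      beta_reduce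
      symm
      set E := Complex.exp ((p:ℂ)*t)
      set C := Complex.cos ((q:ℂ)*t)
      set S := Complex.sin ((q:ℂ)*t)
      linear_combination (-(E*C)) * hpqC + (E*S) * hqC

private lemma yau_pvec_pow (n k : ℕ) [NeZero n] (j : Fin n) :
    Pvec n k j = (Complex.exp (2 * (Real.pi:ℂ) * Complex.I * k / n)) ^ (j : ℕ) := by
  rw [Pvec, ← Complex.exp_nat_mul]
  congr 1
  ring

private lemma yau_root_pow_n (n k : ℕ) [NeZero n] :
    (Complex.exp (2 * (Real.pi:ℂ) * Complex.I * k / n)) ^ n = 1 := by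
  rw [← Complex.exp_nat_mul]
  have hn : (n:ℂ) ≠ 0 := Nat.cast_ne_zero.mpr (NeZero.ne n)
  have : (n:ℂ) * (2 * (Real.pi:ℂ) * Complex.I * k / n) = k * (2 * Real.pi * Complex.I) := by
    field_simp
  rw [this, Complex.exp_nat_mul, Complex.exp_two_pi_mul_I, one_pow]

private lemma yau_root_pow_mod (n k a : ℕ) [NeZero n] :
    (Complex.exp (2 * (Real.pi:ℂ) * Complex.I * k / n)) ^ (a % n)
      = (Complex.exp (2 * (Real.pi:ℂ) * Complex.I * k / n)) ^ a := by
  conv_rhs => rw [← Nat.div_add_mod a n]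
  rw [pow_add, pow_mul, yau_root_pow_n, one_pow, one_mul]

private lemma yau_pvec_shift (n k : ℕ) [NeZero n] (i : Fin n) :
    Pvec n k (i + 1) = Complex.exp (2 * (Real.pi:ℂ) * Complex.I * k / n) * Pvec n k i := by
  rw [yau_pvec_pow, yau_pvec_pow]
  have : ((i + 1 : Fin n) : ℕ) = ((i : ℕ) + 1) % n := by
    rw [Fin.add_def, Fin.val_one']
    conv_rhs => rw [Nat.add_mod, Nat.mod_eq_of_lt i.isLt]
  rw [this, yau_root_pow_mod, pow_succ, mul_comm]

private lemma yau_lap_mulVec (n : ℕ) [NeZero n] (v : Fin n → ℂ) (i : Fin n) :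
    (lapM n).mulVec v i = v (i + 1) + v (i - 1) - 2 * v i := by
  simp [lapM, Matrix.mulVec, dotProduct, add_mul, ite_mul, Finset.sum_add_distrib]
  ring

private lemma yau_lap_eig (n k : ℕ) [NeZero n] :
    (lapM n).mulVec (Pvec n k) = (((-4 * Real.sin (Real.pi*k/n)^2 : ℝ)) : ℂ) • Pvec n k := by
  funext i
  set e := Complex.exp (2 * (Real.pi:ℂ) * Complex.I * k / n) with he_def
  have he : e ≠ 0 := Complex.exp_ne_zero _
  have hs : e * Pvec n k (i-1) = Pvec n k i := by
    rw [← yau_pvec_shift]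
    congr 1
    exact sub_add_cancel i 1
  have hsub : Pvec n k (i-1) = e⁻¹ * Pvec n k i := by
    field_simp [← hs]
    rw [mul_comm]; exact hs
  rw [yau_lap_mulVec, Pi.smul_apply, yau_pvec_shift, hsub, ← he_def]
  have key : e + e⁻¹ - 2 = (((-4 * Real.sin (Real.pi*k/n)^2 : ℝ)) : ℂ) := by
    have harg : 2 * (Real.pi:ℂ) * Complex.I * k / n = ((2*Real.pi*(k:ℝ)/n : ℝ):ℂ) * Complex.I := by
      push_cast; ring
    set θ : ℝ := 2*Real.pi*(k:ℝ)/n with hθ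
    have he2 : e = Complex.cos θ + Complex.sin θ * Complex.I := by
      rw [he_def, harg, Complex.exp_mul_I]
    have he3 : e⁻¹ = Complex.cos θ - Complex.sin θ * Complex.I := by
      rw [he_def, harg, ← Complex.exp_neg]
      rw [show -(((θ:ℝ):ℂ) * Complex.I) = ((-θ:ℝ):ℂ) * Complex.I by push_cast; ring]
      rw [Complex.exp_mul_I]
      push_cast
      rw [Complex.cos_neg, Complex.sin_neg]
      ring
    rw [he3, he2, ← Complex.ofReal_cos, ← Complex.ofReal_sin]
    have hreal : 2 * Real.cos θ - 2 = -4 * Real.sin (Real.pi*k/n)^2 := by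
      have h1 := Real.cos_two_mul' (x := Real.pi*(k:ℝ)/n)
      have h2 := Real.sin_sq_add_cos_sq (Real.pi*(k:ℝ)/n)
      rw [show θ = 2*(Real.pi*(k:ℝ)/n) by rw [hθ]; ring, h1]
      linarith
    push_cast [← hreal]
    ring
  rw [← key, smul_eq_mul]
  ring

private lemma yau_lap_pow_eig (n k m : ℕ) [NeZero n] :
    ((lapM n)^m).mulVec (Pvec n k)
      = ((((-4 * Real.sin (Real.pi*k/n)^2 : ℝ))^m : ℝ) : ℂ) • Pvec n k := by
  induction m with
  | zero => simp [Matrix.one_mulVec]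
  | succ m ih =>
      rw [pow_succ', ← Matrix.mulVec_mulVec, ih, Matrix.mulVec_smul, yau_lap_eig, smul_smul,
        pow_succ]
      push_cast
      ring_nf

private lemma yau_mulVec_finsum {N : Type*} [Fintype N] [DecidableEq N]
    (M : Matrix N N ℂ) (s : Finset ℕ) (v : ℕ → N → ℂ) :
    M.mulVec (∑ i ∈ s, v i) = ∑ i ∈ s, M.mulVec (v i) := by
  exact map_sum M.mulVecLin v s

end YauAux

/-- Convergence of the Yau difference flow to the target polygon: the solution of
`X'' + βX' = (-1)^{m+1} M^m (X - Y)` with `X(0) = X₀`, constructed with the mode-0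
free constant chosen as `a₀ = β(y₀ - α⁰₀)` and all other free constants zero
(so each nonzero mode of `X - Y` carries a decaying factor `z_k(t)` depending on the
eigenvalue regime), satisfies `X(t) → Y` as `t → ∞`. -/
theorem yau_difference_convergence (n m : ℕ) [NeZero n] (hn : 3 ≤ n) (hm : 1 ≤ m)
    (β : ℝ) (hβ : 0 < β) (y α0 : ℕ → ℂ)
    (Y : Fin n → ℂ) (hY : Y = ∑ k ∈ Finset.range n, y k • Pvec n k)
    (lam γ rp : ℕ → ℝ)
    (hlam : ∀ k, lam k = -(4 : ℝ) ^ m * Real.sin (Real.pi * k / n) ^ (2 * m))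
    (hγ : ∀ k, γ k = Real.sqrt (-lam k - β ^ 2 / 4))
    (hrp : ∀ k, rp k = -β / 2 + Real.sqrt (β ^ 2 / 4 + lam k))
    (z : ℕ → ℝ → ℂ)
    (hzover : ∀ k, 1 ≤ k → |lam k| < β ^ 2 / 4 →
      ∀ t : ℝ, z k t = Complex.exp ((rp k : ℂ) * t))
    (hzcrit : ∀ k, 1 ≤ k → lam k = -β ^ 2 / 4 →
      ∀ t : ℝ, z k t = Complex.exp (-(β : ℂ) * t / 2))
    (hzosc : ∀ k, 1 ≤ k → β ^ 2 / 4 < |lam k| →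
      ∀ t : ℝ, z k t = Complex.exp (-(β : ℂ) * t / 2) * Real.cos (γ k * t))
    (X : ℝ → Fin n → ℂ)
    (hX : ∀ t : ℝ, X t
      = (y 0 + (α0 0 - y 0) * Complex.exp (-(β : ℂ) * t)) • Pvec n 0
        + ∑ k ∈ Finset.Ico 1 n, (y k + (α0 k - y k) * z k t) • Pvec n k) :
    (∀ t : ℝ, deriv (deriv X) t + β • deriv X t
        = ((-1 : ℂ) ^ (m + 1) • (lapM n) ^ m).mulVec (X t - Y)) ∧
      X 0 = ∑ k ∈ Finset.range n, α0 k • Pvec n k ∧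
      Filter.Tendsto X Filter.atTop (nhds Y) := by
  have hn0 : 0 < n := by omega
  set w : ℕ → ℝ → ℂ :=
    fun k => if k = 0 then (fun t : ℝ => Complex.exp (-(β:ℂ) * t)) else z k with hw_def
  have hwex : ∀ k, k < n → ∃ p q : ℝ, p < 0 ∧ p^2 + β*p - q^2 = lam k ∧
      (q = 0 ∨ 2*p + β = 0) ∧
      ∀ t : ℝ, w k t = Complex.exp (p*t) * Complex.cos (q*t) := by
    intro k hk
    rcases Nat.eq_zero_or_pos k with hk0 | hk1
    · subst hk0
      have h0 : lam 0 = 0 := by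
        have hz : Real.pi * ((0:ℕ):ℝ) / n = 0 := by norm_num
        rw [hlam, hz, Real.sin_zero, zero_pow (by omega : 2*m ≠ 0), mul_zero]
      refine ⟨-β, 0, by linarith, by rw [h0]; ring, Or.inl rfl, ?_⟩
      intro t
      have hwz : w 0 t = Complex.exp (-(β:ℂ) * t) := by simp [hw_def]
      rw [hwz, show ((-β : ℝ):ℂ) * t = -(β:ℂ)*t by push_cast; ring]
      norm_num
    · have hkn : (k:ℝ) < n := by exact_mod_cast hk
      have hk1' : (1:ℝ) ≤ k := by exact_mod_cast hk1
      have hnr : (0:ℝ) < n := by exact_mod_cast hn0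
      have hargpos : 0 < Real.pi * k / n := by
        apply div_pos (by nlinarith [Real.pi_pos]) hnr
      have harglt : Real.pi * k / n < Real.pi := by
        rw [div_lt_iff₀ hnr]
        nlinarith [Real.pi_pos]
      have hsinpos : 0 < Real.sin (Real.pi*k/n) := Real.sin_pos_of_pos_of_lt_pi hargpos harglt
      have hlamneg : lam k < 0 := by
        rw [hlam]
        have h1 : 0 < Real.sin (Real.pi*k/n) ^ (2*m) := pow_pos hsinpos _
        have h2 : (0:ℝ) < 4^m := by positivity
        nlinarith
      have hkz : k ≠ 0 := by omega
      have hwz : w k = z k := by simp [hw_def, hkz]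
      have habs : |lam k| = -lam k := abs_of_neg hlamneg
      rcases lt_trichotomy (|lam k|) (β^2/4) with hlt | heq | hgt
      · have hpos : (0:ℝ) ≤ β^2/4 + lam k := by rw [habs] at hlt; linarith
        have hs2 : Real.sqrt (β^2/4 + lam k) ^ 2 = β^2/4 + lam k := Real.sq_sqrt hpos
        refine ⟨rp k, 0, ?_, ?_, Or.inl rfl, ?_⟩
        · rw [hrp]
          have hlt2 : Real.sqrt (β^2/4 + lam k) < Real.sqrt (β^2/4) :=
            Real.sqrt_lt_sqrt hpos (by linarith)
          have h4 : Real.sqrt (β^2/4) = β/2 := by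
            rw [show β^2/4 = (β/2)^2 by ring, Real.sqrt_sq (by linarith)]
          linarith
        · rw [hrp]; linear_combination hs2
        · intro t
          rw [hwz, hzover k hk1 hlt t]
          norm_num
      · have hlameq : lam k = -(β^2/4) := by rw [habs] at heq; linarith
        refine ⟨-β/2, 0, by linarith, by rw [hlameq]; ring, Or.inl rfl, ?_⟩
        intro t
        rw [hwz, hzcrit k hk1 (by rw [hlameq]; ring) t]
        rw [show ((-β/2 : ℝ):ℂ) * t = -(β:ℂ)*t/2 by push_cast; ring]
        norm_num
      · have hpos : (0:ℝ) ≤ -lam k - β^2/4 := by rw [habs] at hgt; linarith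
        have hq2 : γ k ^ 2 = -lam k - β^2/4 := by rw [hγ]; exact Real.sq_sqrt hpos
        refine ⟨-β/2, γ k, by linarith, by linear_combination -hq2, Or.inr (by ring), ?_⟩
        intro t
        rw [hwz, hzosc k hk1 hgt t]
        rw [show ((-β/2 : ℝ):ℂ) * t = -(β:ℂ)*t/2 by push_cast; ring,
          show ((γ k : ℝ):ℂ) * (t:ℂ) = ((γ k * t : ℝ):ℂ) by push_cast; ring,
          Complex.ofReal_cos]
  have hall : ∀ k, ∃ w1 : ℝ → ℂ, k < n →
      (w k 0 = 1 ∧ Filter.Tendsto (w k) Filter.atTop (nhds 0) ∧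
        (∀ t, HasDerivAt (w k) (w1 t) t) ∧
        (∀ t, HasDerivAt w1 ((lam k : ℂ) * w k t - (β:ℂ) * w1 t) t)) := by
    intro k
    by_cases hk : k < n
    · obtain ⟨h0, htend, w1, hd1, hd2⟩ := yau_mode_bundle β (lam k) (w k) (hwex k hk)
      exact ⟨w1, fun _ => ⟨h0, htend, hd1, hd2⟩⟩
    · exact ⟨0, fun h => absurd h hk⟩
  choose W1 hW1 using hall
  have hXs : ∀ t, X t = ∑ k ∈ Finset.range n,
      (y k + (α0 k - y k) * w k t) • Pvec n k := by
    intro t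
    rw [hX t, Finset.range_eq_Ico, Finset.sum_eq_sum_Ico_succ_bot hn0]
    have h1 : ∀ k ∈ Finset.Ico 1 n, (y k + (α0 k - y k) * w k t) • Pvec n k
        = (y k + (α0 k - y k) * z k t) • Pvec n k := by
      intro k hk
      have hkz : k ≠ 0 := by
        simp only [Finset.mem_Ico] at hk; omega
      simp [hw_def, hkz]
    rw [Finset.sum_congr rfl h1]
    have h0 : w 0 t = Complex.exp (-(β:ℂ) * t) := by simp [hw_def]
    rw [h0]
  have hXF : X = fun t => ∑ k ∈ Finset.range n,
      (y k + (α0 k - y k) * w k t) • Pvec n k := funext hXs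
  have hDa : ∀ t, HasDerivAt (fun t => ∑ k ∈ Finset.range n,
      (y k + (α0 k - y k) * w k t) • Pvec n k)
      (∑ k ∈ Finset.range n, ((α0 k - y k) * W1 k t) • Pvec n k) t := by
    intro t
    apply HasDerivAt.fun_sum
    intro k hk
    have hk' : k < n := Finset.mem_range.mp hk
    exact ((((hW1 k hk').2.2.1 t).const_mul (α0 k - y k)).const_add (y k)).smul_const (Pvec n k)
  have hDb : ∀ t, HasDerivAt (fun t => ∑ k ∈ Finset.range n,
      ((α0 k - y k) * W1 k t) • Pvec n k)
      (∑ k ∈ Finset.range n,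
        ((α0 k - y k) * ((lam k : ℂ) * w k t - (β:ℂ) * W1 k t)) • Pvec n k) t := by
    intro t
    apply HasDerivAt.fun_sum
    intro k hk
    have hk' : k < n := Finset.mem_range.mp hk
    exact (((hW1 k hk').2.2.2 t).const_mul (α0 k - y k)).smul_const (Pvec n k)
  have hderiv1 : deriv X = fun t => ∑ k ∈ Finset.range n,
      ((α0 k - y k) * W1 k t) • Pvec n k := by
    funext t
    rw [hXF]
    exact (hDa t).deriv
  have hsc : ∀ k : ℕ, ((-1:ℂ))^(m+1) *
      ((((-4 * Real.sin (Real.pi*(k:ℝ)/n)^2 : ℝ))^m : ℝ) : ℂ) = ((lam k : ℝ) : ℂ) := by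
    intro k
    rw [hlam]
    have hsplit : ((-4 * Real.sin (Real.pi*(k:ℝ)/n)^2 : ℝ))^m
        = (-1:ℝ)^m * (4^m * Real.sin (Real.pi*(k:ℝ)/n)^(2*m)) := by
      rw [show (-4 * Real.sin (Real.pi*(k:ℝ)/n)^2 : ℝ)
          = (-1) * (4 * Real.sin (Real.pi*(k:ℝ)/n)^2) by ring,
        mul_pow, mul_pow, ← pow_mul]
    have hodd : ((-1:ℝ))^(m+1) * ((-1:ℝ))^m = -1 := by
      rw [← pow_add, show m+1+m = 2*m+1 by ring]
      exact Odd.neg_one_pow ⟨m, by ring⟩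
    rw [show ((-1:ℂ)) = ((-1:ℝ):ℂ) by norm_num, ← Complex.ofReal_pow, ← Complex.ofReal_mul]
    congr 1
    rw [hsplit]
    linear_combination ((4:ℝ)^m * (Real.sin (Real.pi*(k:ℝ)/n))^(2*m)) * hodd
  refine ⟨?_, ?_, ?_⟩
  · intro t
    rw [hderiv1]
    rw [(hDb t).deriv]
    have hXY : X t - Y = ∑ k ∈ Finset.range n,
        ((α0 k - y k) * w k t) • Pvec n k := by
      rw [hXs t, hY, ← Finset.sum_sub_distrib]
      apply Finset.sum_congr rfl
      intro k _
      rw [← sub_smul]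
      congr 1
      ring
    rw [hXY, Matrix.smul_mulVec, yau_mulVec_finsum, Finset.smul_sum, Finset.smul_sum,
      ← Finset.sum_add_distrib]
    apply Finset.sum_congr rfl
    intro k hk
    rw [Matrix.mulVec_smul, yau_lap_pow_eig, smul_smul, smul_smul, ← smul_assoc]
    rw [← add_smul]
    congr 1
    rw [Complex.real_smul]
    linear_combination (-(α0 k - y k) * w k t) * hsc k
  · rw [hXs 0]
    apply Finset.sum_congr rfl
    intro k hk
    have h1 := (hW1 k (Finset.mem_range.mp hk)).1
    rw [h1]
    congr 1
    ring
  · rw [hXF, hY]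
    apply tendsto_finset_sum
    intro k hk
    have htend := (hW1 k (Finset.mem_range.mp hk)).2.1
    have hc := (htend.const_mul (α0 k - y k)).const_add (y k)
    rw [show y k + (α0 k - y k) * 0 = y k by ring] at hc
    exact hc.smul_const (Pvec n k)
end
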